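/- arXiv:1902.04281 — 8 statements merged into one kernel-verified Lean document; each statement's English description precedes it below -/
import Mathlib

section
/- Let G be a finite group, F a field with char(F) ∤ |G|, and α ∈ Z²(G, F^*). The twisted group algebra F^α G has a commutative simple component in its Wedderburn decomposition if and only if the class [α] lies in the image of the inflation map from Ext(G/G', F^*) to H²(G, F^*). -/
/-- Type synonym carrying the twisted product group structure. -/
structure TwExt (K Q : Type) where
  a : K
  x : Q

/-- The (commutative) extension group built from a normalized symmetric 2-cocycle. -/
def twCommGroup {K Q : Type} [CommGroup K] [CommGroup Q] (β : Q → Q → K)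
    (hcoc : ∀ x y z, β x y * β (x * y) z = β x (y * z) * β y z)
    (hsym : ∀ x y, β x y = β y x)
    (h1 : ∀ x, β 1 x = 1) : CommGroup (TwExt K Q) where
  mul p q := ⟨p.a * q.a * β p.x q.x, p.x * q.x⟩
  one := ⟨1, 1⟩
  inv p := ⟨(p.a * β p.x p.x⁻¹)⁻¹, p.x⁻¹⟩
  mul_assoc p q r := by
    cases p with | mk a x =>
    cases q with | mk b y =>
    cases r with | mk c z =>
    have h := hcoc x y z
    show TwExt.mk (a * b * β x y * c * β (x * y) z) ((x * y) * z)
        = TwExt.mk (a * (b * c * β y z) * β x (y * z)) (x * (y * z))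
    rw [TwExt.mk.injEq]
    refine ⟨?_, mul_assoc x y z⟩
    have e1 : a * b * β x y * c * β (x * y) z = a * b * c * (β x y * β (x * y) z) := by
      simp only [mul_assoc, mul_comm, mul_left_comm]
    rw [e1, h]
    simp only [mul_assoc, mul_comm, mul_left_comm]
  one_mul p := by
    cases p with | mk a x =>
    show TwExt.mk (1 * a * β 1 x) (1 * x) = TwExt.mk a x
    rw [h1, one_mul, mul_one, one_mul]
  mul_one p := by
    cases p with | mk a x =>
    show TwExt.mk (a * 1 * β x 1) (x * 1) = TwExt.mk a x
    rw [hsym x 1, h1, mul_one, mul_one, mul_one]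
  inv_mul_cancel p := by
    cases p with | mk a x =>
    show TwExt.mk ((a * β x x⁻¹)⁻¹ * a * β x⁻¹ x) (x⁻¹ * x) = TwExt.mk 1 1
    rw [hsym x⁻¹ x, TwExt.mk.injEq]
    refine ⟨?_, inv_mul_cancel x⟩
    rw [mul_inv]
    have e1 : a⁻¹ * (β x x⁻¹)⁻¹ * a * β x x⁻¹
        = (a⁻¹ * a) * ((β x x⁻¹)⁻¹ * β x x⁻¹) := by
      simp only [mul_assoc, mul_comm, mul_left_comm]
    rw [e1, inv_mul_cancel, inv_mul_cancel, one_mul]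
  mul_comm p q := by
    cases p with | mk a x =>
    cases q with | mk b y =>
    show TwExt.mk (a * b * β x y) (x * y) = TwExt.mk (b * a * β y x) (y * x)
    rw [hsym x y, mul_comm a b, mul_comm x y]

/-- Units of an algebraically closed field admit `n`-th roots for all nonzero integers. -/
theorem units_exists_zpow_eq {K : Type} [Field K] [IsAlgClosed K] (a : Kˣ) {n : ℤ}
    (hn : n ≠ 0) : ∃ u : Kˣ, u ^ n = a := by
  have key : ∀ (b : Kˣ) (m : ℕ), m ≠ 0 → ∃ u : Kˣ, u ^ m = b := by
    intro b m hm
    obtain ⟨z, hz⟩ := IsAlgClosed.exists_pow_nat_eq (b : K) (Nat.pos_of_ne_zero hm)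
    have hz0 : z ≠ 0 := by
      rintro rfl
      rw [zero_pow hm] at hz
      exact b.ne_zero hz.symm
    refine ⟨Units.mk0 z hz0, Units.ext ?_⟩
    simpa using hz
  rcases n with m | m
  · obtain ⟨u, hu⟩ := key a m (by simpa using hn)
    exact ⟨u, by rw [Int.ofNat_eq_coe, zpow_natCast, hu]⟩
  · obtain ⟨u, hu⟩ := key a (m + 1) m.succ_ne_zero
    refine ⟨u⁻¹, ?_⟩
    rw [zpow_negSucc, inv_pow, inv_inv, hu]

/-- A symmetric 2-cocycle with values in the units of an algebraically closed field splits. -/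
theorem split_symm_cocycle {K Q : Type} [Field K] [IsAlgClosed K] [CommGroup Q]
    (β : Q → Q → Kˣ)
    (hcoc : ∀ x y z, β x y * β (x * y) z = β x (y * z) * β y z)
    (hsym : ∀ x y, β x y = β y x) :
    ∃ T : Q → Kˣ, ∀ x y, β x y = T x * T y * (T (x * y))⁻¹ := by
  classical
  -- normalize the cocycle
  set c : Kˣ := β 1 1 with hc
  have hone : ∀ x, β 1 x = c := by
    intro x
    have h := hcoc 1 1 x
    rw [one_mul, one_mul] at h
    exact (mul_right_cancel h).symm
  -- the normalized cocycle
  set β' : Q → Q → Kˣ := fun x y => c⁻¹ * β x y with hβ'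
  have hcoc' : ∀ x y z, β' x y * β' (x * y) z = β' x (y * z) * β' y z := by
    intro x y z
    have h := hcoc x y z
    simp only [hβ']
    calc c⁻¹ * β x y * (c⁻¹ * β (x * y) z) = c⁻¹ * c⁻¹ * (β x y * β (x * y) z) := by
          simp only [mul_assoc, mul_comm, mul_left_comm]
      _ = c⁻¹ * c⁻¹ * (β x (y * z) * β y z) := by rw [h]
      _ = c⁻¹ * β x (y * z) * (c⁻¹ * β y z) := by
          simp only [mul_assoc, mul_comm, mul_left_comm]
  have hsym' : ∀ x y, β' x y = β' y x := fun x y => by simp only [hβ', hsym x y]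
  have h1' : ∀ x, β' 1 x = 1 := fun x => by simp only [hβ', hone x, inv_mul_cancel]
  -- build the extension group
  letI : CommGroup (TwExt Kˣ Q) := twCommGroup β' hcoc' hsym' h1'
  -- divisibility of Kˣ
  letI : DivisibleBy (Additive Kˣ) ℤ :=
    { div := fun a n =>
        if h : n = 0 then 0
        else Additive.ofMul (units_exists_zpow_eq (Additive.toMul a) h).choose
      div_zero := fun a => by simp
      div_cancel := fun {n} a hn => by
        simp only [dif_neg hn]
        have := (units_exists_zpow_eq (Additive.toMul a) hn).choose_spec
        exact congrArg Additive.ofMul this }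
  have hinj : Module.Injective ℤ (Additive Kˣ) := (Module.Baer.of_divisible _).injective
  -- the inclusion Kˣ → E
  let i : Kˣ →* TwExt Kˣ Q :=
    { toFun := fun a => ⟨a, 1⟩
      map_one' := rfl
      map_mul' := fun a b => by
        show TwExt.mk (a * b) (1 : Q) = TwExt.mk (a * b * β' 1 1) (1 * 1)
        rw [h1' 1, mul_one, mul_one]
      }
  let f : Additive Kˣ →ₗ[ℤ] Additive (TwExt Kˣ Q) := (MonoidHom.toAdditive i).toIntLinearMap
  have finj : Function.Injective f := by
    intro p q hpq
    have : (Additive.toMul (f p)).a = (Additive.toMul (f q)).a := by rw [hpq]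
    exact Additive.toMul.injective this
  obtain ⟨h, hh⟩ := hinj.out f finj LinearMap.id
  let r : TwExt Kˣ Q →* Kˣ := MonoidHom.toAdditive.symm h.toAddMonoidHom
  have hr : ∀ a : Kˣ, r ⟨a, 1⟩ = a := fun a => hh (Additive.ofMul a)
  -- the splitting map for β'
  let T' : Q → Kˣ := fun x => r ⟨1, x⟩
  have hT' : ∀ x y, β' x y = T' x * T' y * (T' (x * y))⁻¹ := by
    intro x y
    have key : (⟨1, x⟩ : TwExt Kˣ Q) * ⟨1, y⟩ = (⟨β' x y, 1⟩ : TwExt Kˣ Q) * ⟨1, x * y⟩ := by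
      show TwExt.mk (1 * 1 * β' x y) (x * y) = TwExt.mk (β' x y * 1 * β' 1 (x * y)) (1 * (x * y))
      rw [h1', one_mul, one_mul, mul_one, mul_one, one_mul]
    have e : T' x * T' y = β' x y * T' (x * y) := by
      have := congrArg r key
      rw [map_mul, map_mul, hr] at this
      exact this
    exact eq_mul_inv_iff_mul_eq.mpr e.symm
  refine ⟨fun x => c * T' x, fun x y => ?_⟩
  have : β x y = c * β' x y := by
    simp only [hβ']
    rw [← mul_assoc, mul_inv_cancel, one_mul]
  rw [this, hT' x y, mul_inv]
  simp only [mul_assoc, mul_comm, mul_left_comm]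
  rw [mul_inv_cancel_left]




/-- A witness that an `F`-algebra `A` has a commutative simple component in its
Wedderburn decomposition: a surjective `F`-algebra homomorphism onto a field. -/
structure CommComponentWitness (F A : Type) [Field F] [Ring A] [Algebra F A] where
  K : Type
  [fieldK : Field K]
  [algK : Algebra F K]
  hom : A →ₐ[F] K
  surj : Function.Surjective hom

/-- Let `G` be a finite group, `F` a field with `char F ∤ |G|`, and `α ∈ Z²(G, F^*)`.
The twisted group algebra `F^α G` (an `F`-algebra `A` with basis `{u_g}` satisfying
`u_g u_h = α(g,h) u_{gh}`) has a commutative simple component in its Wedderburn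
decomposition if and only if `[α]` lies in the image of the inflation map from
`Ext(G/G', F^*)` (classes of symmetric cocycles on the abelianization) to `H²(G, F^*)`,
i.e. `α` is cohomologous to the inflation of a symmetric cocycle on `G/G'`. -/
theorem commutative_component_iff_inflation_of_symmetric
    {F A G : Type} [Field F] [Ring A] [Algebra F A] [Group G] [Fintype G]
    (hchar : (Fintype.card G : F) ≠ 0)
    (u : G → Aˣ) (b : Module.Basis G F A) (hb : ∀ g : G, b g = (u g : A))
    (α : G → G → Fˣ)
    (hcoc : ∀ g h k : G, α g h * α (g * h) k = α g (h * k) * α h k)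
    (hmul : ∀ g h : G, (u g : A) * (u h : A) = (α g h : F) • (u (g * h) : A)) :
    Nonempty (CommComponentWitness F A) ↔
      ∃ β : Abelianization G → Abelianization G → Fˣ,
        (∀ x y z : Abelianization G, β x y * β (x * y) z = β x (y * z) * β y z) ∧
        (∀ x y : Abelianization G, β x y = β y x) ∧
        ∃ μ : G → Fˣ, ∀ g h : G,
          α g h = β (Abelianization.of g) (Abelianization.of h) *
            (μ g * μ h * (μ (g * h))⁻¹) := by
  classical
  set c₀ : Fˣ := α 1 1 with hc₀
  have hu1 : (u 1 : A) = (c₀ : F) • (1 : A) := by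
    have h := congrArg (· * (((u 1)⁻¹ : Aˣ) : A)) (hmul 1 1)
    simp only [mul_assoc, Units.mul_inv, mul_one, smul_mul_assoc, one_mul] at h
    simpa using h
  constructor
  · -- forward direction
    rintro ⟨W⟩
    obtain ⟨K, φ, hsurj⟩ := W
    rename_i fK aK
    letI := fK
    letI := aK
    set j : F →+* K := algebraMap F K with hj
    have jinj : Function.Injective j := j.injective
    have hjne : ∀ w : Fˣ, j (w : F) ≠ 0 := by
      intro w hz
      exact w.ne_zero (jinj (by rw [hz, map_zero]))
    set tv : G → K := fun g => φ ((u g : A)) with htv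
    have htv0 : ∀ g, tv g ≠ 0 := by
      intro g
      have h : tv g * φ ((((u g)⁻¹ : Aˣ) : A)) = 1 := by
        show φ ((u g : A)) * _ = 1
        rw [← map_mul, Units.mul_inv, map_one]
      exact left_ne_zero_of_mul_eq_one h
    have trel : ∀ g h : G, tv g * tv h = j (α g h : F) * tv (g * h) := by
      intro g h
      show φ ((u g : A)) * φ ((u h : A)) = _
      rw [← map_mul, hmul g h, map_smul, Algebra.smul_def]
    have tv1 : tv 1 = j (c₀ : F) := by
      show φ ((u 1 : A)) = _
      rw [hu1, map_smul, map_one, Algebra.smul_def, mul_one]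
    have hinv : ∀ x : G, tv x * tv x⁻¹ = j ((α x x⁻¹ : Fˣ) : F) * j ((c₀ : Fˣ) : F) := by
      intro x
      rw [trel x x⁻¹, mul_inv_cancel, tv1]
    -- the subgroup of elements whose tv-value comes from F
    let S : Subgroup G :=
      { carrier := {g | ∃ w : Fˣ, tv g = j (w : F)}
        one_mem' := ⟨c₀, tv1⟩
        mul_mem' := by
          rintro g h ⟨w1, hw1⟩ ⟨w2, hw2⟩
          refine ⟨(α g h)⁻¹ * (w1 * w2), mul_left_cancel₀ (hjne (α g h)) ?_⟩
          have hvalj := congrArg (fun z : F => j z) (congrArg Units.val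
            (show (α g h) * ((α g h)⁻¹ * (w1 * w2)) = w1 * w2 by group))
          simp only [Units.val_mul, map_mul] at hvalj
          have t1 := trel g h
          simp only [Units.val_mul, map_mul]
          linear_combination (-1 : K) * t1 + tv h * hw1 + j ((w1 : Fˣ) : F) * hw2 - hvalj
        inv_mem' := by
          rintro g ⟨w, hw⟩
          refine ⟨w⁻¹ * ((α g g⁻¹) * c₀), mul_left_cancel₀ (htv0 g) ?_⟩
          have hvalj := congrArg (fun z : F => j z) (congrArg Units.val
            (show w * (w⁻¹ * ((α g g⁻¹) * c₀)) = (α g g⁻¹) * c₀ by group))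
          simp only [Units.val_mul, map_mul] at hvalj
          have i1 := hinv g
          simp only [Units.val_mul, map_mul]
          linear_combination i1 - hvalj - j ((w⁻¹ : Fˣ) : F) * j ((α g g⁻¹ : Fˣ) : F) * j ((c₀ : Fˣ) : F) * hw
      }
    have hcomm_le : commutator G ≤ S := by
      rw [commutator_eq_closure, Subgroup.closure_le]
      rintro x ⟨g, h, rfl⟩
      show ∃ w : Fˣ, tv (g * h * g⁻¹ * h⁻¹) = j (w : F)
      refine ⟨(α g h)⁻¹ * ((α (g * h) g⁻¹)⁻¹ * ((α (g * h * g⁻¹) h⁻¹)⁻¹ *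
        ((α g g⁻¹ * c₀) * (α h h⁻¹ * c₀)))), ?_⟩
      apply mul_left_cancel₀ (hjne (α g h))
      apply mul_left_cancel₀ (hjne (α (g * h) g⁻¹))
      apply mul_left_cancel₀ (hjne (α (g * h * g⁻¹) h⁻¹))
      have hvalj := congrArg (fun z : F => j z) (congrArg Units.val
        (show (α (g * h * g⁻¹) h⁻¹) * ((α (g * h) g⁻¹) * ((α g h) *
          ((α g h)⁻¹ * ((α (g * h) g⁻¹)⁻¹ * ((α (g * h * g⁻¹) h⁻¹)⁻¹ *
          ((α g g⁻¹ * c₀) * (α h h⁻¹ * c₀)))))))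
          = (α g g⁻¹ * c₀) * (α h h⁻¹ * c₀) by group))
      simp only [Units.val_mul, map_mul] at hvalj
      have t1 := trel g h
      have t2 := trel (g * h) g⁻¹
      have t3 := trel (g * h * g⁻¹) h⁻¹
      have i1 := hinv g
      have i2 := hinv h
      simp only [Units.val_mul, map_mul]
      linear_combination (-(tv g⁻¹ * tv h⁻¹)) * t1 + (-(j ((α g h : Fˣ) : F) * tv h⁻¹)) * t2 +
        (-(j ((α g h : Fˣ) : F) * j ((α (g * h) g⁻¹ : Fˣ) : F))) * t3 +
        (tv h * tv h⁻¹) * i1 +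
        (j ((α g g⁻¹ : Fˣ) : F) * j ((c₀ : Fˣ) : F)) * i2 - hvalj
    -- section of the abelianization
    set s : Abelianization G → G := fun x => Quotient.out x with hsdef
    have hs : ∀ x : Abelianization G, Abelianization.of (s x) = x := fun x =>
      Quotient.out_eq' x
    have hd : ∀ g : G, Abelianization.of g = 1 → ∃ w : Fˣ, tv g = j (w : F) := by
      intro g hg
      exact hcomm_le ((QuotientGroup.eq_one_iff g).mp hg)
    have hβex : ∀ x y : Abelianization G,
        ∃ w : Fˣ, tv (s x) * tv (s y) = j (w : F) * tv (s (x * y)) := by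
      intro x y
      obtain ⟨w0, hw0⟩ := hd ((s (x * y))⁻¹ * (s x * s y)) (by
        simp only [map_mul, map_inv, hs]
        group)
      set d : G := (s (x * y))⁻¹ * (s x * s y) with hddef
      have hsd : s x * s y = s (x * y) * d := by rw [hddef, mul_inv_cancel_left]
      refine ⟨(α (s (x * y)) d)⁻¹ * ((α (s x) (s y)) * w0),
        mul_left_cancel₀ (hjne (α (s (x * y)) d)) ?_⟩
      have hvalj := congrArg (fun z : F => j z) (congrArg Units.val
        (show (α (s (x * y)) d) * ((α (s (x * y)) d)⁻¹ * ((α (s x) (s y)) * w0))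
          = (α (s x) (s y)) * w0 by group))
      simp only [Units.val_mul, map_mul] at hvalj
      have h1 := trel (s x) (s y)
      rw [hsd] at h1
      have h2 := trel (s (x * y)) d
      simp only [Units.val_mul, map_mul]
      linear_combination j ((α (s (x * y)) d : Fˣ) : F) * h1 -
        j ((α (s x) (s y) : Fˣ) : F) * h2 +
        j ((α (s x) (s y) : Fˣ) : F) * tv (s (x * y)) * hw0 - tv (s (x * y)) * hvalj
    have hμex : ∀ g : G,
        ∃ w : Fˣ, tv g = j (w : F) * tv (s (Abelianization.of g)) := by
      intro g
      obtain ⟨w0, hw0⟩ := hd ((s (Abelianization.of g))⁻¹ * g) (by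
        simp only [map_mul, map_inv, hs]
        group)
      set d : G := (s (Abelianization.of g))⁻¹ * g with hddef
      have hsd : s (Abelianization.of g) * d = g := by rw [hddef, mul_inv_cancel_left]
      refine ⟨(α (s (Abelianization.of g)) d)⁻¹ * w0,
        mul_left_cancel₀ (hjne (α (s (Abelianization.of g)) d)) ?_⟩
      have hvalj := congrArg (fun z : F => j z) (congrArg Units.val
        (show (α (s (Abelianization.of g)) d) * ((α (s (Abelianization.of g)) d)⁻¹ * w0)
          = w0 by group))
      simp only [Units.val_mul, map_mul] at hvalj
      have h2 := trel (s (Abelianization.of g)) d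
      rw [hsd] at h2
      simp only [Units.val_mul, map_mul]
      linear_combination tv (s (Abelianization.of g)) * hw0 - h2 -
        tv (s (Abelianization.of g)) * hvalj
    set β : Abelianization G → Abelianization G → Fˣ := fun x y => (hβex x y).choose
      with hβdef
    have hβ : ∀ x y : Abelianization G,
        tv (s x) * tv (s y) = j ((β x y : Fˣ) : F) * tv (s (x * y)) :=
      fun x y => (hβex x y).choose_spec
    set μ : G → Fˣ := fun g => (hμex g).choose with hμdef
    have hμ : ∀ g : G, tv g = j ((μ g : Fˣ) : F) * tv (s (Abelianization.of g)) :=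
      fun g => (hμex g).choose_spec
    refine ⟨β, ?_, ?_, μ, ?_⟩
    · -- cocycle identity
      intro x y z
      refine Units.ext (jinj ?_)
      simp only [Units.val_mul, map_mul]
      have e1 := hβ x y
      have e2 := hβ (x * y) z
      have e3 := hβ y z
      have e4 := hβ x (y * z)
      rw [← mul_assoc x y z] at e4
      apply mul_right_cancel₀ (mul_ne_zero (mul_ne_zero (htv0 (s (x * y)))
        (htv0 (s (y * z)))) (htv0 (s (x * y * z))))
      linear_combination
        (-(j ((β (x * y) z : Fˣ) : F) * tv (s (x * y * z)) * tv (s (y * z)))) * e1 -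
        (tv (s (y * z)) * tv (s x) * tv (s y)) * e2 +
        (j ((β x (y * z) : Fˣ) : F) * tv (s (x * y * z)) * tv (s (x * y))) * e3 +
        (tv (s (x * y)) * tv (s y) * tv (s z)) * e4
    · -- symmetry
      intro x y
      refine Units.ext (jinj ?_)
      apply mul_right_cancel₀ (htv0 (s (x * y)))
      have e1 := hβ x y
      have e2 := hβ y x
      rw [mul_comm y x] at e2
      linear_combination e2 - e1
    · -- the inflation identity
      intro g h
      refine Units.ext (jinj ?_)
      apply mul_right_cancel₀ (hjne (μ (g * h)))
      have hvalj := congrArg (fun z : F => j z) (congrArg Units.val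
        (show (β (Abelianization.of g) (Abelianization.of h) *
          (μ g * μ h * (μ (g * h))⁻¹)) * μ (g * h)
          = β (Abelianization.of g) (Abelianization.of h) * (μ g * μ h) by group))
      simp only [Units.val_mul, map_mul] at hvalj
      have h1 := trel g h
      have m1 := hμ g
      have m2 := hμ h
      have m3 := hμ (g * h)
      rw [map_mul Abelianization.of] at m3
      have e := hβ (Abelianization.of g) (Abelianization.of h)
      apply mul_right_cancel₀ (htv0 (s (Abelianization.of g * Abelianization.of h)))
      simp only [Units.val_mul, map_mul]
      linear_combination (-(j ((α g h : Fˣ) : F))) * m3 - h1 + tv h * m1 +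
        j ((μ g : Fˣ) : F) * tv (s (Abelianization.of g)) * m2 +
        j ((μ g : Fˣ) : F) * j ((μ h : Fˣ) : F) * e -
        tv (s (Abelianization.of g * Abelianization.of h)) * hvalj
  · -- backward direction
    rintro ⟨β, hβcoc, hβsym, μ, hαβ⟩
    set j : F →+* AlgebraicClosure F := algebraMap F (AlgebraicClosure F) with hj
    have jinj : Function.Injective j := j.injective
    have hjne : ∀ w : Fˣ, j (w : F) ≠ 0 := by
      intro w hz
      exact w.ne_zero (jinj (by rw [hz, map_zero]))
    obtain ⟨T, hT⟩ := split_symm_cocycle (fun x y => Units.map (j : F →* AlgebraicClosure F) (β x y))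
      (fun x y z => by rw [← map_mul, ← map_mul, hβcoc])
      (fun x y => by
        show Units.map (j : F →* AlgebraicClosure F) (β x y)
          = Units.map (j : F →* AlgebraicClosure F) (β y x)
        rw [hβsym x y])
    have hT0 : ∀ x, (T x : AlgebraicClosure F) ≠ 0 := fun x => (T x).ne_zero
    have hTm : ∀ x y, (T x : AlgebraicClosure F) * (T y : AlgebraicClosure F)
        = j ((β x y : Fˣ) : F) * (T (x * y) : AlgebraicClosure F) := by
      intro x y
      have h' : T x * T y = Units.map (j : F →* AlgebraicClosure F) (β x y) * T (x * y) := by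
        rw [hT x y]
        group
      have h'' := congrArg Units.val h'
      simpa only [Units.val_mul, Units.coe_map, MonoidHom.coe_coe] using h''
    set tv : G → AlgebraicClosure F :=
      fun g => j ((μ g : Fˣ) : F) * (T (Abelianization.of g) : AlgebraicClosure F) with htvdef
    have htv0 : ∀ g, tv g ≠ 0 := fun g => mul_ne_zero (hjne _) (hT0 _)
    have trel : ∀ g h : G, tv g * tv h = j (α g h : F) * tv (g * h) := by
      intro g h
      show (j ((μ g : Fˣ) : F) * (T (Abelianization.of g) : AlgebraicClosure F)) *
          (j ((μ h : Fˣ) : F) * (T (Abelianization.of h) : AlgebraicClosure F))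
        = j (α g h : F) *
          (j ((μ (g * h) : Fˣ) : F) * (T (Abelianization.of (g * h)) : AlgebraicClosure F))
      rw [hαβ g h, map_mul Abelianization.of]
      have e := hTm (Abelianization.of g) (Abelianization.of h)
      have hvalj := congrArg (fun z : F => j z) (congrArg Units.val
        (show (β (Abelianization.of g) (Abelianization.of h) *
          (μ g * μ h * (μ (g * h))⁻¹)) * μ (g * h)
          = β (Abelianization.of g) (Abelianization.of h) * (μ g * μ h) by group))
      simp only [Units.val_mul, map_mul] at hvalj
      apply mul_left_cancel₀ (hjne (μ (g * h)))
      simp only [Units.val_mul, map_mul]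
      linear_combination (j ((μ (g * h) : Fˣ) : F) * (j ((μ g : Fˣ) : F) *
        j ((μ h : Fˣ) : F))) * e -
        (j ((μ (g * h) : Fˣ) : F) *
          (T (Abelianization.of g * Abelianization.of h) : AlgebraicClosure F)) * hvalj
    have tv1 : tv 1 = j ((c₀ : Fˣ) : F) := by
      have h1 := trel 1 1
      rw [mul_one] at h1
      exact mul_right_cancel₀ (htv0 1) h1
    -- build the algebra homomorphism
    set ψ : A →ₗ[F] AlgebraicClosure F := Module.Basis.constr b F tv with hψdef
    have hψb : ∀ g : G, ψ (b g) = tv g := fun g => Module.Basis.constr_basis b F tv g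
    have key : ∀ g h : G, ψ (b g * b h) = ψ (b g) * ψ (b h) := by
      intro g h
      rw [hb g, hb h, hmul g h, ← hb (g * h), map_smul, hψb, ← hb g, ← hb h, hψb, hψb,
        Algebra.smul_def]
      exact (trel g h).symm
    have hψ1 : ψ 1 = 1 := by
      have h1 : (1 : A) = ((c₀ : F))⁻¹ • (u 1 : A) := by
        rw [hu1, smul_smul, inv_mul_cancel₀ (Units.ne_zero c₀), one_smul]
      rw [h1, map_smul, ← hb 1, hψb, tv1, Algebra.smul_def, ← hj, ← map_mul,
        inv_mul_cancel₀ (Units.ne_zero c₀), map_one]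
    have hψmul : ∀ x y : A, ψ (x * y) = ψ x * ψ y := by
      have hbil : (LinearMap.mul F A).compr₂ ψ
          = (LinearMap.mul F (AlgebraicClosure F)).compl₁₂ ψ ψ :=
        b.ext fun g => b.ext fun h => by
          simpa only [LinearMap.compr₂_apply, LinearMap.mul_apply', LinearMap.compl₁₂_apply]
            using key g h
      intro x y
      have h2 := LinearMap.congr_fun (LinearMap.congr_fun hbil x) y
      simpa only [LinearMap.compr₂_apply, LinearMap.mul_apply', LinearMap.compl₁₂_apply]
        using h2
    set φ : A →ₐ[F] AlgebraicClosure F := AlgHom.ofLinearMap ψ hψ1 hψmul with hφdef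
    have hfield : IsField φ.range := Subalgebra.isField_of_algebraic φ.range
    letI : Field φ.range := hfield.toField
    exact ⟨⟨φ.range, φ.rangeRestrict, φ.rangeRestrict_surjective⟩⟩
end

section
/- Let G be a finite group, F a field, α ∈ Z²(G, F^*), and let g ∈ G be an α-regular element, i.e. α(g,h) = α(h,g) for every h in the centralizer of g. If T is a transversal of the centralizer of g in G, then the element S_g = Σ_{t∈T} u_t u_g u_t^{-1} is central in the twisted group algebra F^α G. -/
/-- Let `F^α G` be a twisted group algebra (an `F`-algebra `A` with basis of units
`{u_g}` satisfying `u_g u_h = α(g,h) u_{gh}`), let `g ∈ G` be an `α`-regular element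
(i.e. `α(g,h) = α(h,g)` for all `h` commuting with `g`), and let `T` be a transversal
of the centralizer of `g` in `G`. Then `S_g = Σ_{t ∈ T} u_t u_g u_t⁻¹` is central
in `F^α G`. -/
theorem twisted_class_sum_central
    {F A G : Type} [Field F] [Ring A] [Algebra F A] [Group G] [Fintype G]
    (u : G → Aˣ) (b : Module.Basis G F A) (hb : ∀ x : G, b x = (u x : A))
    (α : G → G → Fˣ)
    (hcoc : ∀ x y z : G, α x y * α (x * y) z = α x (y * z) * α y z)
    (hmul : ∀ x y : G, (u x : A) * (u y : A) = (α x y : F) • (u (x * y) : A))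
    (g : G) (hreg : ∀ h : G, g * h = h * g → α g h = α h g)
    (T : Finset G)
    (hT : ∀ x : G, ∃! t : G, t ∈ T ∧ t⁻¹ * x ∈ Subgroup.centralizer ({g} : Set G)) :
    (∑ t ∈ T, (u t : A) * (u g : A) * (((u t)⁻¹ : Aˣ) : A)) ∈ Subring.center A := by
  classical
  set v : G → A := fun x => (u x : A) * (u g : A) * (((u x)⁻¹ : Aˣ) : A) with hv
  -- v x * u x = u x * u g
  have hvu : ∀ x : G, v x * (u x : A) = (u x : A) * (u g : A) := by
    intro x
    simp [hv, mul_assoc]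
  -- coset invariance of v
  have hcos : ∀ x c : G, g * c = c * g → v (x * c) = v x := by
    intro x c h
    have hsc : ((α x c : F) * (α (x * c) g : F)) = ((α g c : F) * (α x (g * c) : F)) := by
      have h2 : α g c = α c g := hreg c h
      have h3 : α x c * α (x * c) g = α g c * α x (g * c) := by
        rw [hcoc x c g, ← h, ← h2, mul_comm]
      exact_mod_cast congrArg (Units.val) h3
    have L : v (x * c) * ((u x : A) * (u c : A))
        = ((α x c : F) * (α (x * c) g : F)) • (u (x * c * g) : A) := by
      rw [hmul x c, mul_smul_comm, hvu, hmul (x * c) g, smul_smul]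
    have R : v x * ((u x : A) * (u c : A))
        = ((α g c : F) * (α x (g * c) : F)) • (u (x * (g * c)) : A) := by
      rw [← mul_assoc, hvu, mul_assoc, hmul g c, mul_smul_comm, hmul x (g * c), smul_smul]
    have key : v (x * c) * ((u x : A) * (u c : A)) = v x * ((u x : A) * (u c : A)) := by
      rw [L, R, hsc, mul_assoc, ← h]
    have hunit : IsUnit ((u x : A) * (u c : A)) := (u x).isUnit.mul (u c).isUnit
    exact hunit.mul_right_cancel key
  -- commutation relation
  have hxv : ∀ x t : G, (u x : A) * v t = v (x * t) * (u x : A) := by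
    intro x t
    have key : ((u x : A) * v t) * (u t : A) = (v (x * t) * (u x : A)) * (u t : A) := by
      rw [mul_assoc ((u x : A)) (v t), hvu, ← mul_assoc, hmul x t, smul_mul_assoc,
        mul_assoc, hmul x t, mul_smul_comm, hvu]
    exact (u t).isUnit.mul_right_cancel key
  -- representatives
  have hrT : ∀ x : G, (hT x).choose ∈ T := fun x => (hT x).choose_spec.1.1
  have hrC : ∀ x : G, ((hT x).choose)⁻¹ * x ∈ Subgroup.centralizer ({g} : Set G) :=
    fun x => (hT x).choose_spec.1.2
  have hruniq : ∀ x y : G, y ∈ T → y⁻¹ * x ∈ Subgroup.centralizer ({g} : Set G) →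
      y = (hT x).choose := fun x y hy hc => (hT x).choose_spec.2 y ⟨hy, hc⟩
  -- v x = v (rep x)
  have hvr : ∀ x : G, v x = v ((hT x).choose) := by
    intro x
    have hc := hrC x
    rw [Subgroup.mem_centralizer_singleton_iff] at hc
    have hx : (hT x).choose * (((hT x).choose)⁻¹ * x) = x := by group
    have h2 := hcos ((hT x).choose) (((hT x).choose)⁻¹ * x) hc.symm
    rw [hx] at h2
    exact h2
  -- reindexing the sum
  have hsum : ∀ x : G, ∑ t ∈ T, v (x * t) = ∑ t ∈ T, v t := by
    intro x
    refine Finset.sum_nbij' (i := fun t => (hT (x * t)).choose)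
      (j := fun t => (hT (x⁻¹ * t)).choose) (fun t _ => hrT _) (fun t _ => hrT _)
      ?_ ?_ ?_
    · intro t ht
      refine (hruniq _ _ ht ?_).symm
      have hc := hrC (x * t)
      have : t⁻¹ * (x⁻¹ * (hT (x * t)).choose)
          = (((hT (x * t)).choose)⁻¹ * (x * t))⁻¹ := by group
      rw [this]
      exact inv_mem hc
    · intro t ht
      refine (hruniq _ _ ht ?_).symm
      have hc := hrC (x⁻¹ * t)
      have : t⁻¹ * (x * (hT (x⁻¹ * t)).choose)
          = (((hT (x⁻¹ * t)).choose)⁻¹ * (x⁻¹ * t))⁻¹ := by group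
      rw [this]
      exact inv_mem hc
    · intro t _
      exact hvr (x * t)
  -- commuting with each u x
  have hcommu : ∀ x : G, (u x : A) * (∑ t ∈ T, v t) = (∑ t ∈ T, v t) * (u x : A) := by
    intro x
    rw [Finset.mul_sum, Finset.sum_mul]
    calc ∑ t ∈ T, (u x : A) * v t = ∑ t ∈ T, v (x * t) * (u x : A) :=
          Finset.sum_congr rfl fun t _ => hxv x t
      _ = (∑ t ∈ T, v (x * t)) * (u x : A) := (Finset.sum_mul _ _ _).symm
      _ = (∑ t ∈ T, v t) * (u x : A) := by rw [hsum x]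
      _ = ∑ t ∈ T, v t * (u x : A) := Finset.sum_mul _ _ _
  -- conclusion
  rw [Subring.mem_center_iff]
  intro a
  have ha : a = ∑ x : G, b.repr a x • b x := (b.sum_repr a).symm
  rw [ha, Finset.sum_mul, Finset.mul_sum]
  refine Finset.sum_congr rfl fun x _ => ?_
  rw [hb x, smul_mul_assoc, mul_smul_comm, ← hcommu x, Finset.mul_sum]
end

section
/- Let g and h be commuting elements of a finite group G with orders n and m respectively, let F be a field, and let α ∈ Z²(G, F^*). Then the commutator [u_g, u_h] = u_g u_h u_g^{-1} u_h^{-1} in the twisted group algebra F^α G is a scalar λ ∈ F^* which is a root of unity whose order divides gcd(m, n). -/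
/-- Let `g, h` be commuting elements of a finite group `G` of orders `n` and `m`, and
let `F^α G` be a twisted group algebra over a field `F` (an `F`-algebra `A` with basis
of units `{u_x}` satisfying `u_x u_y = α(x,y) u_{xy}`). Then the commutator
`u_g u_h u_g⁻¹ u_h⁻¹` is a scalar `λ ∈ F^*` which is a root of unity of order
dividing `gcd(m, n)`, i.e. `λ^gcd(m,n) = 1`. -/
theorem twisted_commutator_root_of_unity
    {F A G : Type} [Field F] [Ring A] [Algebra F A] [Group G] [Fintype G]
    (u : G → Aˣ) (b : Module.Basis G F A) (hb : ∀ x : G, b x = (u x : A))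
    (α : G → G → Fˣ)
    (hcoc : ∀ x y z : G, α x y * α (x * y) z = α x (y * z) * α y z)
    (hmul : ∀ x y : G, (u x : A) * (u y : A) = (α x y : F) • (u (x * y) : A))
    (g h : G) (hgh : g * h = h * g) :
    ∃ lam : Fˣ,
      ((u g : A) * (u h : A) * (((u g)⁻¹ : Aˣ) : A) * (((u h)⁻¹ : Aˣ) : A)
          = algebraMap F A (lam : F)) ∧
        lam ^ Nat.gcd (orderOf h) (orderOf g) = 1 := by
  classical
  set lam : Fˣ := α g h * (α h g)⁻¹ with hlam
  -- key commutation relation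
  have hkey : (u g : A) * (u h : A) = (lam : F) • ((u h : A) * (u g : A)) := by
    rw [hmul, hmul, hgh, smul_smul]
    congr 1
    have : lam * α h g = α g h := by rw [hlam, inv_mul_cancel_right]
    calc ((α g h : Fˣ) : F) = ((lam * α h g : Fˣ) : F) := by rw [this]
      _ = (lam : F) * ((α h g : Fˣ) : F) := by push_cast; ring
  -- u 1 is a scalar
  have hu1 : (u 1 : A) = ((α 1 1 : Fˣ) : F) • (1 : A) := by
    have h1 := hmul 1 1
    rw [one_mul] at h1
    calc (u 1 : A) = ((u 1 : A) * (u 1 : A)) * (((u 1)⁻¹ : Aˣ) : A) := by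
          rw [mul_assoc, Units.mul_inv, mul_one]
      _ = (((α 1 1 : Fˣ) : F) • (u 1 : A)) * (((u 1)⁻¹ : Aˣ) : A) := by rw [h1]
      _ = ((α 1 1 : Fˣ) : F) • (1 : A) := by rw [smul_mul_assoc, Units.mul_inv]
  -- powers of u x are scalars times u (x^k)
  have hpow : ∀ (x : G) (k : ℕ), ∃ c : Fˣ, ((u x : A)) ^ k = (c : F) • (u (x ^ k) : A) := by
    intro x k
    induction k with
    | zero =>
      refine ⟨(α 1 1)⁻¹, ?_⟩
      rw [pow_zero, pow_zero, hu1, smul_smul]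
      norm_num
    | succ k ih =>
      obtain ⟨c, hc⟩ := ih
      refine ⟨c * α (x ^ k) x, ?_⟩
      rw [pow_succ, hc, smul_mul_assoc, hmul, smul_smul, ← pow_succ]
      push_cast; ring_nf
  -- u x ^ orderOf x is a scalar
  have hscal : ∀ x : G, ∃ d : Fˣ, (u x : A) ^ orderOf x = (d : F) • (1 : A) := by
    intro x
    obtain ⟨c, hc⟩ := hpow x (orderOf x)
    refine ⟨c * α 1 1, ?_⟩
    rw [hc, pow_orderOf_eq_one, hu1, smul_smul]
    push_cast; ring_nf
  -- generic commutation power lemma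
  have key : ∀ (a c : A) (μ : F), a * c = μ • (c * a) →
      ∀ k : ℕ, a * c ^ k = μ ^ k • (c ^ k * a) := by
    intro a c μ hμ k
    induction k with
    | zero => simp
    | succ k ih =>
      rw [pow_succ, ← mul_assoc, ih, smul_mul_assoc, mul_assoc, hμ, mul_smul_comm,
        smul_smul, ← mul_assoc, ← pow_succ, ← pow_succ]
  -- u g ≠ 0
  have hne : ∀ x : G, (u x : A) ≠ 0 := fun x => (hb x) ▸ b.ne_zero x
  have hnz : ∀ (d : F) (e : F) (x : G), d • (u x : A) = e • (u x : A) → d = e := by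
    intro d e x hde
    have := sub_eq_zero.mpr hde
    rw [← sub_smul] at this
    rcases smul_eq_zero.mp this with h0 | h0
    · exact sub_eq_zero.mp h0
    · exact absurd h0 (hne x)
  -- lam ^ orderOf h = 1
  have hvalpow : ∀ (w : Fˣ) (n : ℕ), (w : F) ^ n = 1 → w ^ n = 1 := by
    intro w n hn
    ext
    push_cast
    exact hn
  have hm : lam ^ orderOf h = 1 := by
    obtain ⟨d, hd⟩ := hscal h
    have hk := key (u g : A) (u h : A) (lam : F) hkey (orderOf h)
    rw [hd, mul_smul_comm, mul_one, smul_mul_assoc, one_mul, smul_smul] at hk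
    have h2 := hnz _ _ _ hk
    exact hvalpow _ _ (mul_right_cancel₀ d.ne_zero (by rw [one_mul, ← h2]))
  have hkey' : (u h : A) * (u g : A) = ((lam⁻¹ : Fˣ) : F) • ((u g : A) * (u h : A)) := by
    rw [hkey, smul_smul]
    have : ((lam⁻¹ : Fˣ) : F) * (lam : F) = 1 := by
      push_cast [← Units.val_mul]; simp
    rw [this, one_smul]
  have hn : lam ^ orderOf g = 1 := by
    obtain ⟨d, hd⟩ := hscal g
    have hk := key (u h : A) (u g : A) ((lam⁻¹ : Fˣ) : F) hkey' (orderOf g)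
    rw [hd, mul_smul_comm, mul_one, smul_mul_assoc, one_mul, smul_smul] at hk
    have h2 := hnz _ _ _ hk
    have hinv : (lam⁻¹ : Fˣ) ^ orderOf g = 1 :=
      hvalpow _ _ (mul_right_cancel₀ d.ne_zero (by rw [one_mul, ← h2]))
    rw [inv_pow] at hinv
    exact inv_eq_one.mp hinv
  refine ⟨lam, ?_, ?_⟩
  · rw [hkey, smul_mul_assoc, smul_mul_assoc, mul_assoc ((u h : A)), Units.mul_inv,
      mul_one, Units.mul_inv, Algebra.algebraMap_eq_smul_one]
  · have hdvd : orderOf lam ∣ Nat.gcd (orderOf h) (orderOf g) :=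
      Nat.dvd_gcd (orderOf_dvd_of_pow_eq_one hm) (orderOf_dvd_of_pow_eq_one hn)
    exact orderOf_dvd_iff_pow_eq_one.mp hdvd
end

section
/- Let F be a field and t(F^*) the torsion subgroup of F^*. For any positive integer n, the quotient t(F^*)/t(F^*)^n is a finite cyclic group. -/
/-- For a field `F`, let `t(F^*)` be the torsion subgroup of `F^*` (the roots of unity
in `F`). For any positive integer `n`, the quotient `t(F^*)/t(F^*)^n` by the subgroup
of `n`-th powers is a finite cyclic group. -/
theorem torsion_quotient_pow_cyclic_finite (F : Type) [Field F] (n : ℕ) (hn : 0 < n) :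
    IsCyclic (↥(CommGroup.torsion Fˣ) ⧸
        (powMonoidHom n : ↥(CommGroup.torsion Fˣ) →* ↥(CommGroup.torsion Fˣ)).range) ∧
      Finite (↥(CommGroup.torsion Fˣ) ⧸
        (powMonoidHom n : ↥(CommGroup.torsion Fˣ) →* ↥(CommGroup.torsion Fˣ)).range) := by
  classical
  set T := CommGroup.torsion Fˣ with hT
  set H := (powMonoidHom n : T →* T).range with hH
  set G := T ⧸ H with hG
  -- every element of the quotient satisfies g ^ n = 1
  have hA : ∀ g : G, g ^ n = 1 := by
    intro g
    induction g using QuotientGroup.induction_on with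
    | H x =>
      rw [← QuotientGroup.mk_pow, QuotientGroup.eq_one_iff]
      exact ⟨x, rfl⟩
  -- any two elements of the quotient lie in a common cyclic subgroup
  have hB : ∀ a b : G, ∃ c : G, a ∈ Subgroup.zpowers c ∧ b ∈ Subgroup.zpowers c := by
    intro a b
    obtain ⟨x, rfl⟩ := QuotientGroup.mk_surjective a
    obtain ⟨y, rfl⟩ := QuotientGroup.mk_surjective b
    have hx : IsOfFinOrder (x : Fˣ) := x.2
    have hy : IsOfFinOrder (y : Fˣ) := y.2
    set k := orderOf (x : Fˣ) * orderOf (y : Fˣ) with hk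
    haveI : NeZero k := ⟨Nat.mul_ne_zero hx.orderOf_pos.ne' hy.orderOf_pos.ne'⟩
    have hxk : (x : Fˣ) ∈ rootsOfUnity k F := by
      rw [mem_rootsOfUnity, hk, pow_mul, pow_orderOf_eq_one, one_pow]
    have hyk : (y : Fˣ) ∈ rootsOfUnity k F := by
      rw [mem_rootsOfUnity, hk, mul_comm, pow_mul, pow_orderOf_eq_one, one_pow]
    obtain ⟨ζ, hζ⟩ := (rootsOfUnity.isCyclic F k).exists_generator
    have hζt : (ζ : Fˣ) ∈ T := by
      rw [hT, CommGroup.mem_torsion]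
      exact isOfFinOrder_iff_pow_eq_one.mpr
        ⟨k, NeZero.pos k, (mem_rootsOfUnity k _).mp ζ.2⟩
    obtain ⟨i, hi⟩ := hζ ⟨(x : Fˣ), hxk⟩
    obtain ⟨j, hj⟩ := hζ ⟨(y : Fˣ), hyk⟩
    have hi' : ζ ^ i = (⟨(x : Fˣ), hxk⟩ : rootsOfUnity k F) := hi
    have hj' : ζ ^ j = (⟨(y : Fˣ), hyk⟩ : rootsOfUnity k F) := hj
    have hvx : (ζ : Fˣ) ^ i = (x : Fˣ) := by simpa using congrArg Subtype.val hi'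
    have hvy : (ζ : Fˣ) ^ j = (y : Fˣ) := by simpa using congrArg Subtype.val hj'
    have hzx : (⟨(ζ : Fˣ), hζt⟩ : T) ^ i = x := Subtype.ext (by simpa using hvx)
    have hzy : (⟨(ζ : Fˣ), hζt⟩ : T) ^ j = y := Subtype.ext (by simpa using hvy)
    refine ⟨QuotientGroup.mk (⟨(ζ : Fˣ), hζt⟩ : T), ⟨i, ?_⟩, ⟨j, ?_⟩⟩
    · exact (QuotientGroup.mk_zpow _ _ _).symm.trans (congrArg (QuotientGroup.mk (s := H)) hzx)
    · exact (QuotientGroup.mk_zpow _ _ _).symm.trans (congrArg (QuotientGroup.mk (s := H)) hzy)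
  -- orders in the quotient divide n
  have hord : ∀ g : G, orderOf g ∣ n := fun g => orderOf_dvd_of_pow_eq_one (hA g)
  have hordpos : ∀ g : G, 0 < orderOf g := by
    intro g
    rcases Nat.eq_zero_or_pos (orderOf g) with h | h
    · exact absurd (h ▸ hord g) (by simpa using hn.ne')
    · exact h
  have hordle : ∀ g : G, orderOf g ≤ n := fun g => Nat.le_of_dvd hn (hord g)
  -- pick an element of maximal order
  set P : ℕ → Prop := fun m => ∃ g : G, orderOf g = m with hP
  have hP1 : P 1 := ⟨1, orderOf_one⟩
  set m := Nat.findGreatest P n with hm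
  have hmspec : P m := Nat.findGreatest_spec (Nat.one_le_iff_ne_zero.mpr hn.ne' : 1 ≤ n) hP1
  obtain ⟨g₀, hg₀⟩ := hmspec
  have hmax : ∀ g : G, orderOf g ≤ m := by
    intro g
    by_contra hlt
    push_neg at hlt
    exact Nat.findGreatest_is_greatest hlt (hordle g) ⟨g, rfl⟩
  have hmpos : 0 < m := hg₀ ▸ hordpos g₀
  -- every element is a power of g₀
  have hgen : ∀ b : G, b ∈ Subgroup.zpowers g₀ := by
    intro b
    obtain ⟨c, hg₀c, hbc⟩ := hB g₀ b
    have hcfin : IsOfFinOrder c := orderOf_pos_iff.mp (hordpos c)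
    have h1 : orderOf g₀ ∣ orderOf c := orderOf_dvd_of_mem_zpowers hg₀c
    have h2 : orderOf c = m := le_antisymm (hmax c)
      (hg₀ ▸ Nat.le_of_dvd (hordpos c) h1)
    -- zpowers g₀ = zpowers c since both have the same (finite) cardinality
    have hle : (Subgroup.zpowers g₀ : Set G) ⊆ (Subgroup.zpowers c : Set G) :=
      Subgroup.zpowers_le.mpr hg₀c
    have hcard : (Subgroup.zpowers c : Set G).ncard ≤ (Subgroup.zpowers g₀ : Set G).ncard := by
      rw [← Nat.card_coe_set_eq, ← Nat.card_coe_set_eq]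
      simp only [SetLike.coe_sort_coe, Nat.card_zpowers, hg₀, h2]
      exact le_rfl
    have heq : (Subgroup.zpowers g₀ : Set G) = (Subgroup.zpowers c : Set G) :=
      Set.eq_of_subset_of_ncard_le hle hcard hcfin.finite_zpowers
    have hbmem : b ∈ (Subgroup.zpowers c : Set G) := hbc
    rw [← heq] at hbmem
    exact hbmem
  have hcyc : IsCyclic G := ⟨⟨g₀, hgen⟩⟩
  -- finiteness: surjection from Fin m
  have hfin : Finite G := by
    have hsurj : Function.Surjective (fun i : Fin m => g₀ ^ (i : ℕ)) := by
      intro b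
      have hfo : IsOfFinOrder g₀ := orderOf_pos_iff.mp (hordpos g₀)
      obtain ⟨j, hj⟩ := hfo.mem_powers_iff_mem_zpowers.mpr (hgen b)
      have hj' : g₀ ^ j = b := hj
      refine ⟨⟨j % m, Nat.mod_lt _ hmpos⟩, ?_⟩
      show g₀ ^ (j % m) = b
      rw [← hg₀, pow_mod_orderOf, hj']
    exact Finite.of_surjective _ hsurj
  exact ⟨hcyc, hfin⟩
end

section
/- Let p be a prime, n a positive integer, and F a field of characteristic 0 containing a primitive p-th root of unity (with p odd), such that F does not contain a primitive p^{n-1}-th root of unity. Then the field F(ζ_{p^{n-1}}) obtained by adjoining a primitive p^{n-1}-th root of unity does not contain a primitive p^n-th root of unity. -/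
open Polynomial IntermediateField

/-- For a primitive `m`-th root of unity in a field, two powers agree iff the
exponents are congruent mod `m`. -/
private lemma prim_pow_eq_pow_iff {K : Type*} [Field K] {ζ : K} {m : ℕ} (hm : 0 < m)
    (h : IsPrimitiveRoot ζ m) {a c : ℕ} : ζ ^ a = ζ ^ c ↔ a ≡ c [MOD m] := by
  lift ζ to Kˣ using h.isUnit hm.ne' with u
  rw [IsPrimitiveRoot.coe_units_iff] at h
  rw [← Units.val_pow_eq_pow_val, ← Units.val_pow_eq_pow_val, ← Units.ext_iff,
    pow_eq_pow_iff_modEq, ← h.eq_orderOf]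

/-- Let `p` be an odd prime, `n ≥ 1`, and `F` a field of characteristic `0` containing
a primitive `p`-th root of unity but no primitive `p^(n-1)`-th root of unity. If `K/F`
is the extension generated by a primitive `p^(n-1)`-th root of unity `ζ`
(i.e. `K = F(ζ_{p^(n-1)})`), then `K` contains no primitive `p^n`-th root of unity. -/
theorem adjoin_primitive_root_p_pow (p n : ℕ) (hp : p.Prime) (hpodd : Odd p)
    (hn : 0 < n) (F K : Type) [Field F] [CharZero F] [Field K] [Algebra F K]
    (h1 : ∃ ζ : F, IsPrimitiveRoot ζ p)
    (h2 : ¬ ∃ ζ : F, IsPrimitiveRoot ζ (p ^ (n - 1)))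
    (ζ : K) (hζ : IsPrimitiveRoot ζ (p ^ (n - 1)))
    (hgen : Algebra.adjoin F ({ζ} : Set K) = ⊤) :
    ¬ ∃ ξ : K, IsPrimitiveRoot ξ (p ^ n) := by
  rintro ⟨ξ, hξN⟩
  haveI hfact : Fact p.Prime := ⟨hp⟩
  haveI : CharZero K := charZero_of_injective_algebraMap (algebraMap F K).injective
  by_cases hn1 : n = 1
  · subst hn1
    exact h2 ⟨1, by simp [IsPrimitiveRoot.one]⟩
  have hn2 : 2 ≤ n := by omega
  have hp2 : 2 ≤ p := hp.two_le
  set m1 : ℕ := p ^ (n - 1) with hm1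
  set N : ℕ := p ^ n with hN
  have hm1pos : 0 < m1 := pow_pos hp.pos _
  have hNpos : 0 < N := pow_pos hp.pos _
  haveI : NeZero m1 := ⟨hm1pos.ne'⟩
  haveI : NeZero N := ⟨hNpos.ne'⟩
  -- K is a cyclotomic extension of F, hence Galois and finite dimensional
  have hcyc : IsCyclotomicExtension {m1} F K := by
    rw [IsCyclotomicExtension.iff_adjoin_eq_top]
    constructor
    · rintro a ha
      rw [Set.mem_singleton_iff] at ha
      exact fun _ => ⟨ζ, by rw [ha]; exact hζ⟩
    · rw [eq_top_iff, ← hgen]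
      apply Algebra.adjoin_mono
      intro x hx
      rw [Set.mem_singleton_iff] at hx
      exact ⟨m1, Set.mem_singleton _, hm1pos.ne', by rw [hx]; exact hζ.pow_eq_one⟩
  haveI := hcyc
  haveI : FiniteDimensional F K :=
    IsCyclotomicExtension.finite_of_singleton (n := m1) (A := F) (B := K)
  haveI hGal : IsGalois F K := IsCyclotomicExtension.isGalois (S := {m1}) (K := F) (L := K)
  -- there is an automorphism moving ζ
  have hfix : IntermediateField.fixedField (⊤ : Subgroup (K ≃ₐ[F] K)) = ⊥ :=
    ((IsGalois.tfae.out 0 1).mp hGal)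
  have hσ : ∃ σ : K ≃ₐ[F] K, σ ζ ≠ ζ := by
    by_contra hcon
    push_neg at hcon
    have hζbot : ζ ∈ (⊥ : IntermediateField F K) := by
      rw [← hfix]
      rintro ⟨g, -⟩
      exact hcon g
    rw [IntermediateField.mem_bot] at hζbot
    obtain ⟨z, hz⟩ := hζbot
    exact h2 ⟨z, IsPrimitiveRoot.of_map_of_injective (f := algebraMap F K)
      (by rw [hz]; exact hζ) (algebraMap F K).injective⟩
  obtain ⟨σ, hσζ⟩ := hσ
  -- σ ξ = ξ ^ b
  have hσξ : IsPrimitiveRoot (σ ξ) N := hξN.map_of_injective σ.injective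
  obtain ⟨b, hbN, hb⟩ := hξN.eq_pow_of_pow_eq_one hσξ.pow_eq_one
  -- ζ is a power of ξ ^ p
  have hξp : IsPrimitiveRoot (ξ ^ p) m1 := hξN.pow hNpos (by
    rw [hN, hm1, ← pow_succ']
    congr 1
    omega)
  obtain ⟨c, hcm, hc⟩ := hξp.eq_pow_of_pow_eq_one hζ.pow_eq_one
  -- σ ζ = ζ ^ b
  have hσζb : σ ζ = ζ ^ b := by
    rw [← hc, ← pow_mul, map_pow, ← hb, ← pow_mul, ← pow_mul]
    congr 1
    ring
  -- b ≡ 1 mod p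
  have hα : IsPrimitiveRoot (ξ ^ m1) p := hξN.pow hNpos (by
    rw [hN, hm1, ← pow_succ]
    congr 1
    omega)
  obtain ⟨z, hz⟩ := h1
  have hzK : IsPrimitiveRoot (algebraMap F K z) p :=
    hz.map_of_injective (algebraMap F K).injective
  haveI : NeZero p := ⟨hp.pos.ne'⟩
  obtain ⟨j, hjp, hj⟩ := hzK.eq_pow_of_pow_eq_one hα.pow_eq_one
  have hσα : σ (ξ ^ m1) = ξ ^ m1 := by
    rw [← hj, ← map_pow, AlgEquiv.commutes]
  have hmodp : b ≡ 1 [MOD p] := by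
    have h1' : ξ ^ (b * m1) = ξ ^ (1 * m1) := by
      rw [one_mul, ← hσα, map_pow, ← hb, ← pow_mul]
    have hmm := (prim_pow_eq_pow_iff hNpos hξN).mp h1'
    have hNe : N = p * m1 := by rw [hN, hm1, ← pow_succ']; congr 1; omega
    rw [hNe] at hmm
    exact Nat.ModEq.mul_right_cancel' hm1pos.ne' hmm
  -- ¬ b ≡ 1 mod p^(n-1)
  have hnotmod : ¬ b ≡ 1 [MOD m1] := by
    intro hmod
    apply hσζ
    rw [hσζb, (prim_pow_eq_pow_iff hm1pos hζ).mpr hmod, pow_one]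
  -- b ≥ 2
  have hb1 : 1 ≤ b := by
    rcases Nat.eq_zero_or_pos b with rfl | h
    · exfalso
      apply hσξ.ne_one (by
        calc 1 < 2 := one_lt_two
        _ ≤ p := hp2
        _ ≤ p ^ n := Nat.le_self_pow (by omega) p)
      rw [← hb, pow_zero]
    · exact h
  have hbne1 : b ≠ 1 := by
    intro h
    exact hnotmod (by rw [h])
  have hb2 : 2 ≤ b := by omega
  -- divisibility facts
  have hpb : p ∣ b - 1 := (Nat.modEq_iff_dvd' hb1).mp hmodp.symm
  have hnotdvd : ¬ (m1 ∣ b - 1) := fun h => hnotmod ((Nat.modEq_iff_dvd' hb1).mpr h).symm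
  set s : ℕ := padicValNat p (b - 1) with hs
  have hbm1ne : b - 1 ≠ 0 := by omega
  have hs1 : 1 ≤ s := one_le_padicValNat_of_dvd (by omega) hpb
  have hs2 : s ≤ n - 2 := by
    by_contra hcon
    push_neg at hcon
    apply hnotdvd
    rw [hm1]
    exact (padicValNat_dvd_iff_le hbm1ne).mpr (by omega)
  have hpnotb : ¬ p ∣ b := by
    intro hdvd
    have hone : p ∣ 1 := by
      have := Nat.dvd_sub hdvd hpb
      rwa [Nat.sub_sub_self hb1] at this
    exact absurd (Nat.le_of_dvd one_pos hone) (by omega)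
  -- lifting the exponent
  set k : ℕ := p ^ (n - 1 - s) with hk
  have hkpos : 0 < k := pow_pos hp.pos _
  have hbk2 : 2 ≤ b ^ k := le_trans hb2 (Nat.le_self_pow hkpos.ne' b)
  have hval : padicValNat p (b ^ k - 1) = n - 1 := by
    have hlte := padicValNat.pow_sub_pow (p := p) (x := b) (y := 1) hpodd
      (by omega) (by simpa using hpb) hpnotb hkpos.ne'
    rw [one_pow] at hlte
    rw [hlte, hk, padicValNat.prime_pow, ← hs]
    omega
  have hdvd1 : m1 ∣ b ^ k - 1 := by
    rw [hm1]
    exact (padicValNat_dvd_iff_le (by omega)).mpr (by omega)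
  have hmodk : b ^ k ≡ 1 [MOD m1] :=
    ((Nat.modEq_iff_dvd' (by omega)).mpr hdvd1).symm
  -- powers of σ
  have hpowσ : ∀ m : ℕ, (σ ^ m) ξ = ξ ^ (b ^ m) ∧ (σ ^ m) ζ = ζ ^ (b ^ m) := by
    intro m
    induction m with
    | zero => simp
    | succ m ih =>
      constructor
      · rw [pow_succ σ m, AlgEquiv.mul_apply, ← hb, map_pow, ih.1, ← pow_mul, ← pow_succ]
      · rw [pow_succ σ m, AlgEquiv.mul_apply, hσζb, map_pow, ih.2, ← pow_mul, ← pow_succ]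
  have hσkζ : (σ ^ k) ζ = ζ := by
    rw [(hpowσ k).2, (prim_pow_eq_pow_iff hm1pos hζ).mpr hmodk, pow_one]
  -- σ ^ k is the identity since ζ generates K over F
  have hσk_all : ∀ x : K, (σ ^ k) x = x := by
    intro x
    have hle : Algebra.adjoin F ({ζ} : Set K) ≤
        AlgHom.equalizer ((σ ^ k : K ≃ₐ[F] K) : K →ₐ[F] K) (AlgHom.id F K) := by
      apply Algebra.adjoin_le
      intro y hy
      rw [Set.mem_singleton_iff] at hy
      subst hy
      simpa [AlgHom.mem_equalizer] using hσkζ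
    rw [hgen] at hle
    simpa [AlgHom.mem_equalizer] using hle (Algebra.mem_top : x ∈ (⊤ : Subalgebra F K))
  have hξfix : ξ ^ (b ^ k) = ξ ^ 1 := by
    rw [pow_one, ← (hpowσ k).1, hσk_all]
  have hmodN : b ^ k ≡ 1 [MOD N] := (prim_pow_eq_pow_iff hNpos hξN).mp hξfix
  have hdvdN : N ∣ b ^ k - 1 := (Nat.modEq_iff_dvd' (by omega)).mp hmodN.symm
  have hfin : n ≤ padicValNat p (b ^ k - 1) :=
    (padicValNat_dvd_iff_le (by omega)).mp (hN ▸ hdvdN)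
  omega
end

section
/- Let n ≥ 2 and F a field of characteristic 0 containing a primitive 4th root of unity but no primitive 2^{n-1}-th root of unity. Then F(ζ_{2^{n-1}}) does not contain a primitive 2^n-th root of unity. -/
/-- Lifting-the-exponent style lemma: for `e ≥ 2` and odd `c`,
`(1 + 2^e * c) ^ (2^k) = 1 + 2^(e+k) * d` with `d` odd. -/
lemma two_pow_aux (e c : ℕ) (he : 2 ≤ e) (hc : ¬ 2 ∣ c) (k : ℕ) :
    ∃ d, ¬ 2 ∣ d ∧ (1 + 2 ^ e * c) ^ (2 ^ k) = 1 + 2 ^ (e + k) * d := by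
  induction k with
  | zero => exact ⟨c, hc, by simp⟩
  | succ k ih =>
    obtain ⟨d, hd, hdd⟩ := ih
    obtain ⟨e', he'⟩ : ∃ e', e + k = e' + 1 := ⟨e + k - 1, by omega⟩
    refine ⟨d + 2 ^ e' * d ^ 2, ?_, ?_⟩
    · intro h
      have h2 : (2 : ℕ) ∣ 2 ^ e' * d ^ 2 := Dvd.dvd.mul_right (dvd_pow_self 2 (by omega)) _
      have : (2 : ℕ) ∣ d := by omega
      exact hd this
    · have h2k : (2 : ℕ) ^ (k + 1) = 2 ^ k * 2 := by ring
      rw [h2k, pow_mul, hdd, he', show e + (k + 1) = e' + 2 by omega]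
      ring

/-- Let `n ≥ 2` and let `F` be a field of characteristic `0` containing a primitive
`4`-th root of unity but no primitive `2^(n-1)`-th root of unity. If `K/F` is the
extension generated by a primitive `2^(n-1)`-th root of unity `ζ`
(i.e. `K = F(ζ_{2^(n-1)})`), then `K` contains no primitive `2^n`-th root of unity. -/
theorem adjoin_primitive_root_two_pow (n : ℕ) (hn : 2 ≤ n)
    (F K : Type) [Field F] [CharZero F] [Field K] [Algebra F K]
    (h1 : ∃ ζ : F, IsPrimitiveRoot ζ 4)
    (h2 : ¬ ∃ ζ : F, IsPrimitiveRoot ζ (2 ^ (n - 1)))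
    (ζ : K) (hζ : IsPrimitiveRoot ζ (2 ^ (n - 1)))
    (hgen : Algebra.adjoin F ({ζ} : Set K) = ⊤) :
    ¬ ∃ ξ : K, IsPrimitiveRoot ξ (2 ^ n) := by
  rintro ⟨ξ, hξ⟩
  rcases Nat.lt_or_ge n 4 with h4 | h4
  · interval_cases n
    · refine h2 ⟨-1, ?_⟩
      have : IsPrimitiveRoot (-1 : F) 2 := IsPrimitiveRoot.neg_one 0 (by norm_num)
      simpa using this
    · obtain ⟨ι, hι⟩ := h1
      refine h2 ⟨ι, ?_⟩
      norm_num
      exact hι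
  -- Main case: n ≥ 4.
  have hNpos : 0 < 2 ^ (n - 1) := by positivity
  haveI : NeZero ((2 : ℕ) ^ (n - 1)) := ⟨hNpos.ne'⟩
  set m : ℕ+ := ⟨2 ^ (n - 1), hNpos⟩ with hm
  have hζ' : IsPrimitiveRoot ζ ((m : ℕ)) := hζ
  haveI hcyc : IsCyclotomicExtension {(m : ℕ)} F K := by
    rw [IsCyclotomicExtension.iff_adjoin_eq_top]
    constructor
    · rintro r hr -
      rw [Set.mem_singleton_iff] at hr
      subst hr
      exact ⟨ζ, hζ'⟩
    · rw [eq_top_iff, ← hgen]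
      apply Algebra.adjoin_mono
      intro x hx
      rw [Set.mem_singleton_iff] at hx
      subst hx
      exact ⟨(m : ℕ), Set.mem_singleton _, hNpos.ne', hζ.pow_eq_one⟩
  haveI : FiniteDimensional F K := IsCyclotomicExtension.finiteDimensional {(m : ℕ)} F K
  haveI : IsGalois F K := IsCyclotomicExtension.isGalois {(m : ℕ)} F K
  -- there is an automorphism moving ζ
  have hexists : ∃ σ : K ≃ₐ[F] K, σ ζ ≠ ζ := by
    by_contra hall
    push_neg at hall
    have htop : IntermediateField.fixedField (⊤ : Subgroup (K ≃ₐ[F] K)) = ⊥ :=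
      ((IsGalois.tfae (F := F) (E := K)).out 0 1).mp (inferInstance : IsGalois F K)
    have hbot : ζ ∈ (⊥ : IntermediateField F K) := by
      rw [← htop]
      exact fun g => hall g.1
    obtain ⟨x, hx⟩ := IntermediateField.mem_bot.mp hbot
    refine h2 ⟨x, ?_⟩
    have hxprim : IsPrimitiveRoot (algebraMap F K x) (2 ^ (n - 1)) := by rwa [hx]
    exact hxprim.of_map_of_injective (algebraMap F K).injective
  obtain ⟨σ, hσ⟩ := hexists
  -- basic powers
  have hζM : ζ ^ (2 ^ n) = 1 :=
    (hζ.pow_eq_one_iff_dvd _).mpr (pow_dvd_pow 2 (by omega))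
  have hσξ_pow : (σ ξ) ^ (2 ^ n) = 1 := by
    rw [← map_pow, hξ.pow_eq_one, map_one]
  obtain ⟨A, hAlt, hA⟩ := hξ.eq_pow_of_pow_eq_one hσξ_pow
  obtain ⟨i, hilt, hi⟩ := hξ.eq_pow_of_pow_eq_one hζM
  have hσζ : σ ζ = ζ ^ A := by
    rw [← hi, map_pow, ← hA, ← pow_mul, mul_comm, pow_mul]
  -- A ≥ 1
  have hξne1 : ξ ≠ 1 := hξ.ne_one (Nat.one_lt_pow (by omega) (by norm_num))
  have hA1 : 1 ≤ A := by
    rcases Nat.eq_zero_or_pos A with h0 | h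
    · exfalso
      apply hξne1
      have : σ ξ = 1 := by rw [← hA, h0, pow_zero]
      have := σ.injective (this.trans (map_one σ).symm)
      exact this
    · exact h
  -- 4 ∣ A - 1
  obtain ⟨ι, hι⟩ := h1
  have hj : IsPrimitiveRoot (algebraMap F K ι) 4 :=
    hι.map_of_injective (algebraMap F K).injective
  set j := algebraMap F K ι with hjdef
  have hjM : j ^ (2 ^ n) = 1 := by
    refine (hj.pow_eq_one_iff_dvd _).mpr ?_
    have : (4 : ℕ) = 2 ^ 2 := by norm_num
    rw [this]
    exact pow_dvd_pow 2 (by omega)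
  obtain ⟨w, hwlt, hw⟩ := hξ.eq_pow_of_pow_eq_one hjM
  have hjA : j ^ A = j := by
    rw [← hw, ← pow_mul, mul_comm, pow_mul, hA, ← map_pow, hw]
    exact σ.commutes ι
  have hj0 : j ≠ 0 := hj.ne_zero (by norm_num)
  have h4A : (4 : ℕ) ∣ A - 1 := by
    refine (hj.pow_eq_one_iff_dvd _).mp ?_
    have hcalc : j ^ (A - 1) * j = 1 * j := by
      rw [one_mul, ← pow_succ, Nat.sub_add_cancel hA1, hjA]
    exact mul_right_cancel₀ hj0 hcalc
  -- ¬ 2^(n-1) ∣ A - 1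
  have hNA : ¬ ((2 : ℕ) ^ (n - 1) ∣ A - 1) := by
    intro hdvd
    apply hσ
    rw [hσζ]
    have h1' : ζ ^ (A - 1) = 1 := (hζ.pow_eq_one_iff_dvd _).mpr hdvd
    calc ζ ^ A = ζ ^ (A - 1) * ζ := by rw [← pow_succ, Nat.sub_add_cancel hA1]
    _ = ζ := by rw [h1', one_mul]
  -- factor A - 1 = 2^e * c
  have hA0 : A - 1 ≠ 0 := fun h => hNA (h ▸ dvd_zero _)
  obtain ⟨e, c, hc, hec⟩ := Nat.exists_eq_pow_mul_and_not_dvd hA0 2 (by norm_num)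
  have he2 : 2 ≤ e := by
    have hcop : Nat.Coprime (2 ^ 2) c :=
      (Nat.prime_two.coprime_iff_not_dvd.mpr hc).pow_left 2
    have h4' : (2 : ℕ) ^ 2 ∣ 2 ^ e * c := by
      rw [← hec]
      simpa using h4A
    have : (2 : ℕ) ^ 2 ∣ 2 ^ e := hcop.dvd_of_dvd_mul_right h4'
    exact (Nat.pow_dvd_pow_iff_le_right one_lt_two).mp this
  have heN : e ≤ n - 2 := by
    by_contra hcon
    push_neg at hcon
    exact hNA (hec ▸ Dvd.dvd.mul_right (pow_dvd_pow 2 (by omega)) c)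
  -- lifting the exponent
  set t := n - 1 - e with ht
  obtain ⟨d, hd, hdEq⟩ := two_pow_aux e c he2 hc t
  have hAeq : A = 1 + 2 ^ e * c := by omega
  have hApow : A ^ (2 ^ t) = 1 + 2 ^ (n - 1) * d := by
    rw [hAeq, hdEq, show e + t = n - 1 by omega]
  -- iterate σ
  have hiter : ∀ k : ℕ, (σ ^ k) ξ = ξ ^ (A ^ k) := by
    intro k
    induction k with
    | zero => simp
    | succ k ih =>
      rw [pow_succ, AlgEquiv.mul_apply, ← hA, map_pow, ih, ← pow_mul, ← pow_succ]
  -- the automorphism power map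
  have ha := hζ'.autToPow_spec F σ
  set a := hζ'.autToPow F σ with hadef
  have haA : ζ ^ ((a : ZMod (m : ℕ)).val) = ζ ^ A := by
    rw [ha]
    exact hσζ
  have hζ0 : ζ ≠ 0 := hζ.ne_zero hNpos.ne'
  -- modular equality of exponents
  have hmod : ((a : ZMod (m : ℕ)).val) ≡ A [MOD (2 : ℕ) ^ (n - 1)] := by
    rw [Nat.modEq_iff_dvd]
    have hz : ζ ^ (((A : ℤ)) - ((a : ZMod (m : ℕ)).val : ℤ)) = 1 := by
      rw [zpow_sub₀ hζ0, zpow_natCast, zpow_natCast, haA,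
        div_self (pow_ne_zero _ hζ0)]
    exact (hζ.zpow_eq_one_iff_dvd _).mp hz
  -- a ^ (2 ^ t) = 1
  have hapow : a ^ (2 ^ t) = 1 := by
    ext
    push_cast
    have hval : ((a : ZMod (m : ℕ))) = (((a : ZMod (m : ℕ)).val : ℕ) : ZMod (m : ℕ)) :=
      (ZMod.natCast_rightInverse _).symm
    rw [hval, ← Nat.cast_pow, ← Nat.cast_one (R := ZMod (m : ℕ))]
    rw [ZMod.natCast_eq_natCast_iff]
    calc ((a : ZMod (m : ℕ)).val) ^ (2 ^ t) ≡ A ^ (2 ^ t) [MOD (2 : ℕ) ^ (n - 1)] :=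
      hmod.pow _
    _ = 1 + 2 ^ (n - 1) * d := hApow
    _ ≡ 1 + 0 [MOD (2 : ℕ) ^ (n - 1)] := by
        exact Nat.ModEq.add_left 1 ((Nat.modEq_zero_iff_dvd).mpr ⟨d, rfl⟩)
    _ = 1 := by ring
  have hσpow : σ ^ (2 ^ t) = 1 := by
    apply hζ'.autToPow_injective F
    rw [map_pow, map_one]
    exact hapow
  -- final contradiction
  have hfix : ξ ^ (A ^ (2 ^ t)) = ξ := by
    rw [← hiter, hσpow]
    rfl
  rw [hApow, pow_add, pow_one] at hfix
  have hone : ξ ^ (2 ^ (n - 1) * d) = 1 := by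
    have : ξ * ξ ^ (2 ^ (n - 1) * d) = ξ * 1 := by
      rw [mul_one]
      exact hfix
    exact mul_left_cancel₀ (hξ.ne_zero (by positivity)) this
  have hdvd : (2 : ℕ) ^ n ∣ 2 ^ (n - 1) * d := (hξ.pow_eq_one_iff_dvd _).mp hone
  have h2d : (2 : ℕ) ∣ d := by
    have h2n : (2 : ℕ) ^ n = 2 ^ (n - 1) * 2 := by
      rw [← pow_succ]
      congr 1
      omega
    rw [h2n] at hdvd
    exact (Nat.mul_dvd_mul_iff_left hNpos).mp hdvd
  exact hd h2d
end

section
/- Let A and B be finite groups. Then the Schur multiplier of the direct product satisfies M(A × B) ≅ M(A) × M(B) × (A/A' ⊗_ℤ B/B'), where ⊗_ℤ denotes the tensor product of the abelianizations. -/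
/-- The group of 2-cocycles of `G` with values in the trivial `G`-module `M`. -/
def cocycleSet (G M : Type) [Group G] [CommGroup M] : Subgroup ((G × G) → M) where
  carrier := {α | ∀ g h k : G, α (g, h) * α (g * h, k) = α (g, h * k) * α (h, k)}
  one_mem' := by intro g h k; simp
  mul_mem' := by
    intro a c ha hc g h k
    simp only [Pi.mul_apply]
    rw [mul_mul_mul_comm, ha g h k, hc g h k, mul_mul_mul_comm]
  inv_mem' := by
    intro a ha g h k
    simp only [Pi.inv_apply, ← mul_inv, ha g h k]

/-- The homomorphism sending `μ : G → M` to the 2-coboundary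
`(g, h) ↦ μ(g) μ(h) μ(gh)⁻¹`. -/
def coboundaryHom (G M : Type) [Group G] [CommGroup M] : (G → M) →* ((G × G) → M) where
  toFun μ := fun p => μ p.1 * μ p.2 * (μ (p.1 * p.2))⁻¹
  map_one' := by funext p; simp
  map_mul' := by
    intro μ ν; funext p
    simp only [Pi.mul_apply, mul_inv]
    ac_rfl

/-- The second cohomology group `H²(G, M)` of `G` with coefficients in the trivial
`G`-module `M`: 2-cocycles modulo 2-coboundaries. -/
abbrev H2 (G M : Type) [Group G] [CommGroup M] : Type :=
  ↥(cocycleSet G M) ⧸ ((coboundaryHom G M).range.subgroupOf (cocycleSet G M))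

namespace SchurAux

section Generic

variable {G : Type} [Group G]

lemma cocycle_apply (α : cocycleSet G ℂˣ) (g h k : G) :
    α.1 (g, h) * α.1 (g * h, k) = α.1 (g, h * k) * α.1 (h, k) := α.2 g h k

lemma cocycle_one_left (α : cocycleSet G ℂˣ) (g : G) : α.1 (1, g) = α.1 (1, 1) := by
  have h := α.2 1 1 g
  simp only [one_mul] at h
  exact (mul_right_cancel h).symm ▸ rfl

lemma cocycle_one_left' (α : cocycleSet G ℂˣ) (g : G) : α.1 (1, 1) = α.1 (1, g) := by
  have h := α.2 1 1 g
  simp only [one_mul] at h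
  exact mul_right_cancel h

lemma cocycle_right_one (α : cocycleSet G ℂˣ) (g : G) : α.1 (g, 1) = α.1 (1, 1) := by
  have h := α.2 g 1 1
  simp only [mul_one] at h
  exact mul_left_cancel h

lemma coboundary_cocycle {μ : G → ℂˣ} : coboundaryHom G ℂˣ μ ∈ cocycleSet G ℂˣ := by
  intro g h k
  show (μ g * μ h * (μ (g * h))⁻¹) * (μ (g * h) * μ k * (μ (g * h * k))⁻¹)
      = (μ g * μ (h * k) * (μ (g * (h * k)))⁻¹) * (μ h * μ k * (μ (h * k))⁻¹)
  rw [mul_assoc g h k]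
  rw [Units.ext_iff]
  push_cast
  field_simp

end Generic

end SchurAux

namespace SchurAux

variable (A B : Type) [Group A] [Group B]

/-- Bimultiplicative pairings `A → B → ℂˣ`. -/
def pairingSet : Subgroup (A → B → ℂˣ) where
  carrier := {f | (∀ a a' b, f (a * a') b = f a b * f a' b) ∧
      ∀ a b b', f a (b * b') = f a b * f a b'}
  one_mem' := by constructor <;> intros <;> simp
  mul_mem' := by
    rintro f g ⟨hf1, hf2⟩ ⟨hg1, hg2⟩
    constructor <;> intros <;>
      simp only [Pi.mul_apply, hf1, hf2, hg1, hg2, mul_mul_mul_comm]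
  inv_mem' := by
    rintro f ⟨hf1, hf2⟩
    constructor <;> intros <;> simp only [Pi.inv_apply, hf1, hf2, mul_inv]

variable {A B}

lemma pairing_fst_one (f : pairingSet A B) (a : A) : f.1 a 1 = 1 := by
  have h := f.2.2 a 1 1
  rw [mul_one] at h
  exact (left_eq_mul.mp h)

lemma pairing_one_snd (f : pairingSet A B) (b : B) : f.1 1 b = 1 := by
  have h := f.2.1 1 1 b
  rw [mul_one] at h
  exact (left_eq_mul.mp h)

variable (A B)

/-- Inflation along the first projection. -/
def inflAhom : cocycleSet A ℂˣ →* cocycleSet (A × B) ℂˣ :=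
  MonoidHom.mk'
    (fun α => ⟨fun p => α.1 (p.1.1, p.2.1), fun g h k => α.2 g.1 h.1 k.1⟩)
    (fun _ _ => rfl)

/-- Inflation along the second projection. -/
def inflBhom : cocycleSet B ℂˣ →* cocycleSet (A × B) ℂˣ :=
  MonoidHom.mk'
    (fun α => ⟨fun p => α.1 (p.1.2, p.2.2), fun g h k => α.2 g.2 h.2 k.2⟩)
    (fun _ _ => rfl)

/-- The cocycle associated to a pairing. -/
def pairHom : pairingSet A B →* cocycleSet (A × B) ℂˣ :=
  MonoidHom.mk'
    (fun f => ⟨fun p => f.1 p.2.1 p.1.2, by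
      intro g h k
      show f.1 h.1 g.2 * f.1 k.1 (g.2 * h.2) = f.1 (h.1 * k.1) g.2 * f.1 k.1 h.2
      rw [f.2.2, f.2.1, mul_assoc]⟩)
    (fun _ _ => rfl)

variable {A B}

@[simp] lemma inflAhom_apply (α : cocycleSet A ℂˣ) (p : (A × B) × (A × B)) :
    (inflAhom A B α).1 p = α.1 (p.1.1, p.2.1) := rfl

@[simp] lemma inflBhom_apply (α : cocycleSet B ℂˣ) (p : (A × B) × (A × B)) :
    (inflBhom A B α).1 p = α.1 (p.1.2, p.2.2) := rfl

@[simp] lemma pairHom_apply (f : pairingSet A B) (p : (A × B) × (A × B)) :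
    (pairHom A B f).1 p = f.1 p.2.1 p.1.2 := rfl

@[simp] lemma coboundaryHom_apply {G : Type} [Group G] (μ : G → ℂˣ) (p : G × G) :
    coboundaryHom G ℂˣ μ p = μ p.1 * μ p.2 * (μ (p.1 * p.2))⁻¹ := rfl

variable (A B)

/-- Restriction of a cocycle on `A × B` to `A`. -/
def resA (α : cocycleSet (A × B) ℂˣ) : cocycleSet A ℂˣ :=
  ⟨fun p => α.1 ((p.1, 1), (p.2, 1)), by
    intro g h k
    have := α.2 (g, 1) (h, 1) (k, 1)
    simpa using this⟩

/-- Restriction of a cocycle on `A × B` to `B`. -/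
def resB (α : cocycleSet (A × B) ℂˣ) : cocycleSet B ℂˣ :=
  ⟨fun p => α.1 ((1, p.1), (1, p.2)), by
    intro g h k
    have := α.2 (1, g) (1, h) (1, k)
    simpa using this⟩

@[simp] lemma resA_apply (α : cocycleSet (A × B) ℂˣ) (p : A × A) :
    (resA A B α).1 p = α.1 ((p.1, 1), (p.2, 1)) := rfl

@[simp] lemma resB_apply (α : cocycleSet (A × B) ℂˣ) (p : B × B) :
    (resB A B α).1 p = α.1 ((1, p.1), (1, p.2)) := rfl

/-- The master decomposition of a cocycle on a product. -/
lemma master (α : cocycleSet (A × B) ℂˣ) (x x' : A) (y y' : B) :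
    α.1 ((x, y), (x', y')) = α.1 ((x, 1), (x', 1)) * α.1 ((1, y), (1, y')) *
      (α.1 ((1, y), (x', 1)) * (α.1 ((x', 1), (1, y)))⁻¹) *
      ((α.1 ((x, 1), (1, y)))⁻¹ * (α.1 ((x', 1), (1, y')))⁻¹ *
        α.1 ((x * x', 1), (1, y * y'))) := by
  have H1 := α.2 (x, 1) (x', 1) (1, y)
  have H2 := α.2 (x, 1) (1, y) (x', 1)
  have H3 := α.2 (x * x', 1) (1, y) (1, y')
  have H4 := α.2 (x, y) (x', 1) (1, y')
  simp only [Prod.mk_mul_mk, mul_one, one_mul] at H1 H2 H3 H4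
  have e1 : α.1 ((x, 1), (x', y)) =
      α.1 ((x, 1), (x', 1)) * α.1 ((x * x', 1), (1, y)) * (α.1 ((x', 1), (1, y)))⁻¹ := by
    rw [eq_mul_inv_iff_mul_eq]; exact H1.symm
  have e2 : α.1 ((x, y), (x', 1)) =
      (α.1 ((x, 1), (1, y)))⁻¹ * (α.1 ((x, 1), (x', y)) * α.1 ((1, y), (x', 1))) := by
    rw [eq_inv_mul_iff_mul_eq]; exact H2
  have e3 : α.1 ((x * x', y), (1, y')) =
      (α.1 ((x * x', 1), (1, y)))⁻¹ *
        (α.1 ((x * x', 1), (1, y * y')) * α.1 ((1, y), (1, y'))) := by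
    rw [eq_inv_mul_iff_mul_eq]; exact H3
  have e4 : α.1 ((x, y), (x', y')) =
      α.1 ((x, y), (x', 1)) * α.1 ((x * x', y), (1, y')) * (α.1 ((x', 1), (1, y')))⁻¹ := by
    rw [eq_mul_inv_iff_mul_eq]; exact H4.symm
  rw [e4, e2, e1, e3]
  rw [Units.ext_iff]
  push_cast
  field_simp

end SchurAux

namespace SchurAux

variable (A B : Type) [Group A] [Group B]

/-- The coboundary part in the master decomposition. -/
def muOf (α : cocycleSet (A × B) ℂˣ) : (A × B) → ℂˣ :=
  fun q => (α.1 ((q.1, 1), (1, q.2)))⁻¹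

lemma decomp (α : cocycleSet (A × B) ℂˣ) (p : (A × B) × (A × B)) :
    α.1 p = (inflAhom A B (resA A B α)).1 p * (inflBhom A B (resB A B α)).1 p *
      (α.1 ((1, p.1.2), (p.2.1, 1)) * (α.1 ((p.2.1, 1), (1, p.1.2)))⁻¹) *
      coboundaryHom (A × B) ℂˣ (muOf A B α) p := by
  obtain ⟨⟨x, y⟩, ⟨x', y'⟩⟩ := p
  simp only [inflAhom_apply, inflBhom_apply, resA_apply, resB_apply, coboundaryHom_apply,
    muOf, Prod.fst_mul, Prod.snd_mul, inv_inv]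
  exact master A B α x x' y y'

/-- The pairing extracted from a cocycle on a product. -/
def pairOf (α : cocycleSet (A × B) ℂˣ) : pairingSet A B := by
  refine ⟨fun a b => α.1 ((1, b), (a, 1)) * (α.1 ((a, 1), (1, b)))⁻¹, ?_⟩
  set pf : A → B → ℂˣ := fun a b => α.1 ((1, b), (a, 1)) * (α.1 ((a, 1), (1, b)))⁻¹ with hpf
  have hmem : (fun p : (A × B) × (A × B) => pf p.2.1 p.1.2) ∈ cocycleSet (A × B) ℂˣ := by
    have heq : (fun p : (A × B) × (A × B) => pf p.2.1 p.1.2) =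
        (α * (inflAhom A B (resA A B α))⁻¹ * (inflBhom A B (resB A B α))⁻¹).1 *
          (coboundaryHom (A × B) ℂˣ (muOf A B α))⁻¹ := by
      funext p
      simp only [Pi.mul_apply, Pi.inv_apply, Subgroup.coe_mul, Subgroup.coe_inv]
      rw [decomp A B α p]
      simp only [hpf]
      rw [Units.ext_iff]
      push_cast
      field_simp
    rw [heq]
    exact mul_mem (α * (inflAhom A B (resA A B α))⁻¹ * (inflBhom A B (resB A B α))⁻¹).2
      (inv_mem coboundary_cocycle)
  have hone : ∀ a : A, pf a 1 = 1 := by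
    intro a
    show α.1 (1, (a, 1)) * (α.1 ((a, 1), 1))⁻¹ = 1
    rw [cocycle_one_left α ((a, 1) : A × B), cocycle_right_one α ((a, 1) : A × B),
      mul_inv_cancel]
  have hone' : ∀ b : B, pf 1 b = 1 := by
    intro b
    show α.1 ((1, b), 1) * (α.1 (1, (1, b)))⁻¹ = 1
    rw [cocycle_right_one α ((1, b) : A × B), cocycle_one_left α ((1, b) : A × B),
      mul_inv_cancel]
  constructor
  · intro a a' b
    have := hmem (1, b) (a, 1) (a', 1)
    simp only [Prod.mk_mul_mk, mul_one, one_mul] at this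
    rw [hone] at this
    rw [mul_one] at this
    exact this.symm
  · intro a b b'
    have := hmem (1, b) (1, b') (a, 1)
    simp only [Prod.mk_mul_mk, mul_one, one_mul] at this
    rw [hone'] at this
    rw [one_mul] at this
    exact this
end SchurAux

namespace SchurAux

variable (A B : Type) [Group A] [Group B]

/-- Inflation on `H²` along the first projection. -/
def psiA : H2 A ℂˣ →* H2 (A × B) ℂˣ :=
  QuotientGroup.map _ _ (inflAhom A B) (by
    intro α hα
    rw [Subgroup.mem_subgroupOf] at hα
    rw [Subgroup.mem_comap, Subgroup.mem_subgroupOf]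
    obtain ⟨μ, hμ⟩ := hα
    refine ⟨fun p => μ p.1, ?_⟩
    funext p
    show μ p.1.1 * μ p.2.1 * (μ (p.1.1 * p.2.1))⁻¹ = α.1 (p.1.1, p.2.1)
    rw [← hμ]
    rfl)

/-- Inflation on `H²` along the second projection. -/
def psiB : H2 B ℂˣ →* H2 (A × B) ℂˣ :=
  QuotientGroup.map _ _ (inflBhom A B) (by
    intro α hα
    rw [Subgroup.mem_subgroupOf] at hα
    rw [Subgroup.mem_comap, Subgroup.mem_subgroupOf]
    obtain ⟨μ, hμ⟩ := hα
    refine ⟨fun p => μ p.2, ?_⟩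
    funext p
    show μ p.1.2 * μ p.2.2 * (μ (p.1.2 * p.2.2))⁻¹ = α.1 (p.1.2, p.2.2)
    rw [← hμ]
    rfl)

/-- The map from pairings to `H²` of the product. -/
def psiP : pairingSet A B →* H2 (A × B) ℂˣ :=
  (QuotientGroup.mk' _).comp (pairHom A B)

/-- The combined map onto `H²(A × B)`. -/
def bigPsi : H2 A ℂˣ × H2 B ℂˣ × pairingSet A B →* H2 (A × B) ℂˣ :=
  MonoidHom.mk' (fun x => psiA A B x.1 * psiB A B x.2.1 * psiP A B x.2.2) (by
    rintro ⟨a1, b1, c1⟩ ⟨a2, b2, c2⟩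
    simp only [Prod.fst_mul, Prod.snd_mul, Prod.mk_mul_mk, map_mul]
    rw [mul_mul_mul_comm (psiA A B a1) (psiA A B a2) (psiB A B b1) (psiB A B b2),
      mul_mul_mul_comm (psiA A B a1 * psiB A B b1) (psiA A B a2 * psiB A B b2)
        (psiP A B c1) (psiP A B c2)])

lemma bigPsi_surjective : Function.Surjective (bigPsi A B) := by
  intro q
  obtain ⟨α, rfl⟩ := QuotientGroup.mk_surjective q
  refine ⟨⟨QuotientGroup.mk (resA A B α), QuotientGroup.mk (resB A B α), pairOf A B α⟩, ?_⟩
  show psiA A B (QuotientGroup.mk (resA A B α)) * psiB A B (QuotientGroup.mk (resB A B α)) *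
      psiP A B (pairOf A B α) = QuotientGroup.mk α
  rw [psiA, psiB, QuotientGroup.map_mk, QuotientGroup.map_mk]
  show QuotientGroup.mk (inflAhom A B (resA A B α)) * QuotientGroup.mk (inflBhom A B (resB A B α)) *
      QuotientGroup.mk (pairHom A B (pairOf A B α)) = QuotientGroup.mk α
  rw [← QuotientGroup.mk_mul, ← QuotientGroup.mk_mul]
  rw [QuotientGroup.eq]
  rw [Subgroup.mem_subgroupOf]
  refine ⟨muOf A B α, ?_⟩
  funext p
  simp only [Subgroup.coe_mul, Subgroup.coe_inv, Pi.mul_apply, Pi.inv_apply]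
  rw [decomp A B α p]
  simp only [inflAhom_apply, inflBhom_apply, pairHom_apply, pairOf]
  rw [Units.ext_iff]
  push_cast
  field_simp

end SchurAux

namespace SchurAux

variable (A B : Type) [Group A] [Group B]

lemma bigPsi_injective : Function.Injective (bigPsi A B) := by
  refine (injective_iff_map_eq_one _).mpr ?_
  rintro ⟨qa, qb, f⟩ h
  obtain ⟨a, rfl⟩ := QuotientGroup.mk_surjective qa
  obtain ⟨b, rfl⟩ := QuotientGroup.mk_surjective qb
  have h' : (QuotientGroup.mk (inflAhom A B a * inflBhom A B b * pairHom A B f) :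
      H2 (A × B) ℂˣ) = 1 := by
    rw [← h]
    show QuotientGroup.mk _ = psiA A B (QuotientGroup.mk a) * psiB A B (QuotientGroup.mk b) *
      psiP A B f
    rw [psiA, psiB, QuotientGroup.map_mk, QuotientGroup.map_mk]
    show QuotientGroup.mk _ = QuotientGroup.mk (inflAhom A B a) *
      QuotientGroup.mk (inflBhom A B b) * QuotientGroup.mk (pairHom A B f)
    rw [← QuotientGroup.mk_mul, ← QuotientGroup.mk_mul]
  rw [QuotientGroup.eq_one_iff, Subgroup.mem_subgroupOf] at h'
  obtain ⟨μ, hμ⟩ := h'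
  have hp : ∀ p : (A × B) × (A × B), μ p.1 * μ p.2 * (μ (p.1 * p.2))⁻¹ =
      a.1 (p.1.1, p.2.1) * b.1 (p.1.2, p.2.2) * f.1 p.2.1 p.1.2 := by
    intro p
    have := congrFun hμ p
    simpa using this
  have hf11 : f.1 1 1 = 1 := pairing_fst_one f 1
  -- the pairing is trivial
  have hf : f = 1 := by
    refine Subtype.ext (funext fun x => funext fun y => ?_)
    have h1 := hp ((x, 1), (1, y))
    have h2 := hp ((1, y), (x, 1))
    simp only [Prod.mk_mul_mk, mul_one, one_mul] at h1 h2
    rw [cocycle_right_one a x, cocycle_one_left b y, hf11, mul_one] at h1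
    rw [cocycle_one_left a x, cocycle_right_one b y] at h2
    rw [mul_comm (μ (1, y)) (μ (x, 1))] at h2
    have := h1.symm.trans h2
    show f.1 x y = (1 : A → B → ℂˣ) x y
    exact left_eq_mul.mp this
  -- the `A`-class is trivial
  have hqa : (QuotientGroup.mk a : H2 A ℂˣ) = 1 := by
    rw [QuotientGroup.eq_one_iff, Subgroup.mem_subgroupOf]
    refine ⟨fun x => μ (x, 1) * (b.1 (1, 1))⁻¹, ?_⟩
    funext p
    obtain ⟨x, x'⟩ := p
    have h1 := hp ((x, 1), (x', 1))
    simp only [Prod.mk_mul_mk, mul_one, one_mul] at h1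
    rw [pairing_fst_one f, mul_one] at h1
    show μ (x, 1) * (b.1 (1, 1))⁻¹ * (μ (x', 1) * (b.1 (1, 1))⁻¹) *
        (μ (x * x', 1) * (b.1 (1, 1))⁻¹)⁻¹ = a.1 (x, x')
    rw [Units.ext_iff]
    have := congrArg Units.val h1
    push_cast at this ⊢
    field_simp at this ⊢
    linear_combination this
  -- the `B`-class is trivial
  have hqb : (QuotientGroup.mk b : H2 B ℂˣ) = 1 := by
    rw [QuotientGroup.eq_one_iff, Subgroup.mem_subgroupOf]
    refine ⟨fun y => μ (1, y) * (a.1 (1, 1))⁻¹, ?_⟩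
    funext p
    obtain ⟨y, y'⟩ := p
    have h1 := hp ((1, y), (1, y'))
    simp only [Prod.mk_mul_mk, mul_one, one_mul] at h1
    rw [pairing_one_snd f, mul_one] at h1
    show μ (1, y) * (a.1 (1, 1))⁻¹ * (μ (1, y') * (a.1 (1, 1))⁻¹) *
        (μ (1, y * y') * (a.1 (1, 1))⁻¹)⁻¹ = b.1 (y, y')
    rw [Units.ext_iff]
    have := congrArg Units.val h1
    push_cast at this ⊢
    field_simp at this ⊢
    linear_combination this
  rw [hqa, hqb, hf]
  rfl

end SchurAux

namespace SchurAux

open TensorProduct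

variable (A B : Type) [Group A] [Group B]

/-- The tensor product of the abelianizations. -/
abbrev TT : Type := TensorProduct ℤ (Additive (Abelianization A)) (Additive (Abelianization B))

variable {A B}

/-- A pairing gives a homomorphism `B →* ℂˣ` for each `a : A`. -/
def innerHom (f : pairingSet A B) (x : A) : B →* ℂˣ :=
  MonoidHom.mk' (f.1 x) (f.2.2 x)

/-- Lifting along the abelianization, as a homomorphism of hom-groups. -/
def liftHom {G : Type} [Group G] : (G →* ℂˣ) →* (Abelianization G →* ℂˣ) :=
  MonoidHom.mk' (fun φ => Abelianization.lift φ) (by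
    intro u v
    apply Abelianization.hom_ext
    ext g
    simp [Abelianization.lift_apply_of])

/-- A pairing gives a homomorphism on the abelianizations. -/
def bihom (f : pairingSet A B) : Abelianization A →* (Abelianization B →* ℂˣ) :=
  Abelianization.lift (liftHom.comp
    (MonoidHom.mk' (fun x => innerHom f x) (by
      intro x x'
      ext b
      exact congrArg Units.val (f.2.1 x x' b))))

@[simp] lemma bihom_of_of (f : pairingSet A B) (x : A) (y : B) :
    bihom f (Abelianization.of x) (Abelianization.of y) = f.1 x y := by
  simp [bihom, liftHom, innerHom, Abelianization.lift_apply_of]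

/-- The bi-additive version. -/
def biadd (f : pairingSet A B) :
    Additive (Abelianization A) →+ (Additive (Abelianization B) →+ Additive ℂˣ) where
  toFun x := MonoidHom.toAdditive (bihom f x.toMul)
  map_zero' := by
    refine AddMonoidHom.ext fun y => ?_
    show Additive.ofMul (bihom f (1 : Abelianization A) y.toMul) = 0
    simp
  map_add' x x' := by
    refine AddMonoidHom.ext fun y => ?_
    show Additive.ofMul (bihom f (x.toMul * x'.toMul) y.toMul) = _
    simp [map_mul]

/-- The homomorphism from the tensor product of abelianizations given by a pairing. -/
noncomputable def toTensorHom (f : pairingSet A B) : TT A B →+ Additive ℂˣ :=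
  TensorProduct.liftAddHom (biadd f) (by
    intro r x y
    rw [map_zsmul (biadd f) r x]
    exact (AddMonoidHom.map_zsmul (biadd f x) r y).symm)

/-- The character of the tensor product associated to a pairing. -/
noncomputable def charOf (f : pairingSet A B) : Multiplicative (TT A B) →* ℂˣ :=
  AddMonoidHom.toMultiplicativeLeft (toTensorHom f)

lemma charOf_tmul (f : pairingSet A B) (x : A) (y : B) :
    charOf f (Multiplicative.ofAdd
      ((Additive.ofMul (Abelianization.of x)) ⊗ₜ[ℤ] (Additive.ofMul (Abelianization.of y)))) =
      f.1 x y := by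
  have h0 : charOf f (Multiplicative.ofAdd
      ((Additive.ofMul (Abelianization.of x)) ⊗ₜ[ℤ] (Additive.ofMul (Abelianization.of y)))) =
      ((toTensorHom f)
        ((Additive.ofMul (Abelianization.of x)) ⊗ₜ[ℤ] (Additive.ofMul (Abelianization.of y)))).toMul :=
    rfl
  rw [h0, toTensorHom, TensorProduct.liftAddHom_tmul]
  show (bihom f (Abelianization.of x) (Abelianization.of y)) = f.1 x y
  simp

end SchurAux

namespace SchurAux

open TensorProduct

variable {A B : Type} [Group A] [Group B]

lemma addHom_ext {ψ₁ ψ₂ : TT A B →+ Additive ℂˣ}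
    (h : ∀ (x : A) (y : B),
      ψ₁ ((Additive.ofMul (Abelianization.of x)) ⊗ₜ[ℤ] (Additive.ofMul (Abelianization.of y))) =
      ψ₂ ((Additive.ofMul (Abelianization.of x)) ⊗ₜ[ℤ] (Additive.ofMul (Abelianization.of y)))) :
    ψ₁ = ψ₂ := by
  have hl : ψ₁.toIntLinearMap = ψ₂.toIntLinearMap := by
    apply TensorProduct.ext'
    intro u v
    obtain ⟨x, hx⟩ : ∃ x : A, Abelianization.of x = u.toMul :=
      QuotientGroup.induction_on u.toMul fun z => ⟨z, rfl⟩
    obtain ⟨y, hy⟩ : ∃ y : B, Abelianization.of y = v.toMul :=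
      QuotientGroup.induction_on v.toMul fun z => ⟨z, rfl⟩
    have hu : u = Additive.ofMul (Abelianization.of x) := by
      rw [hx]; rfl
    have hv : v = Additive.ofMul (Abelianization.of y) := by
      rw [hy]; rfl
    rw [hu, hv]
    exact h x y
  exact AddMonoidHom.ext fun t => LinearMap.congr_fun hl t

lemma toTensorHom_tmul (f : pairingSet A B) (x : A) (y : B) :
    toTensorHom f
        ((Additive.ofMul (Abelianization.of x)) ⊗ₜ[ℤ] (Additive.ofMul (Abelianization.of y))) =
      Additive.ofMul (f.1 x y) := by
  rw [toTensorHom, TensorProduct.liftAddHom_tmul]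
  show Additive.ofMul (bihom f (Abelianization.of x) (Abelianization.of y)) = _
  rw [bihom_of_of]

variable (A B)

/-- The character map, as a group homomorphism. -/
noncomputable def charHom : pairingSet A B →* (Multiplicative (TT A B) →* ℂˣ) :=
  MonoidHom.mk' (fun f => charOf f) (by
    intro f g
    have key : toTensorHom (f * g) = toTensorHom f + toTensorHom g := by
      apply addHom_ext
      intro x y
      rw [AddMonoidHom.add_apply, toTensorHom_tmul, toTensorHom_tmul, toTensorHom_tmul]
      rfl
    apply MonoidHom.ext
    intro t
    show ((toTensorHom (f * g)) t.toAdd).toMul = _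
    rw [key]
    rfl)

lemma charHom_injective : Function.Injective (charHom A B) := by
  refine (injective_iff_map_eq_one _).mpr ?_
  intro f h
  refine Subtype.ext (funext fun x => funext fun y => ?_)
  have := charOf_tmul f x y
  rw [show charOf f = charHom A B f from rfl, h] at this
  exact this.symm

lemma charHom_surjective : Function.Surjective (charHom A B) := by
  intro chi
  refine ⟨⟨fun x y => chi (Multiplicative.ofAdd
      ((Additive.ofMul (Abelianization.of x)) ⊗ₜ[ℤ] (Additive.ofMul (Abelianization.of y)))), ?_⟩, ?_⟩
  · constructor
    · intro a a' b
      show chi (Multiplicative.ofAdd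
          ((Additive.ofMul (Abelianization.of (a * a'))) ⊗ₜ[ℤ] (Additive.ofMul (Abelianization.of b)))) = _
      have h1 : Additive.ofMul (Abelianization.of (a * a')) =
          Additive.ofMul (Abelianization.of a) + Additive.ofMul (Abelianization.of a') := by
        rw [map_mul]; rfl
      rw [h1, TensorProduct.add_tmul, ofAdd_add, map_mul]
    · intro a b b'
      show chi (Multiplicative.ofAdd
          ((Additive.ofMul (Abelianization.of a)) ⊗ₜ[ℤ] (Additive.ofMul (Abelianization.of (b * b'))))) = _
      have h1 : Additive.ofMul (Abelianization.of (b * b')) =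
          Additive.ofMul (Abelianization.of b) + Additive.ofMul (Abelianization.of b') := by
        rw [map_mul]; rfl
      rw [h1, TensorProduct.tmul_add, ofAdd_add, map_mul]
  · set fchi : pairingSet A B := ⟨fun x y => chi (Multiplicative.ofAdd
      ((Additive.ofMul (Abelianization.of x)) ⊗ₜ[ℤ] (Additive.ofMul (Abelianization.of y)))), _⟩
    have key : toTensorHom fchi = AddMonoidHom.toMultiplicativeLeft.symm chi := by
      apply addHom_ext
      intro x y
      rw [toTensorHom_tmul]
      rfl
    show charOf fchi = chi
    rw [charOf, key]
    exact AddMonoidHom.toMultiplicativeLeft.apply_symm_apply chi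

end SchurAux

namespace SchurAux

variable (A B : Type) [Group A] [Group B]

lemma finite_TT [Finite A] [Finite B] : Finite (TT A B) := by
  have : Finite (Abelianization A) := inferInstance
  have : Finite (Abelianization B) := inferInstance
  have : Module.Finite ℤ (Additive (Abelianization A)) := Module.Finite.of_finite
  have : Module.Finite ℤ (Additive (Abelianization B)) := Module.Finite.of_finite
  have hfin : Module.Finite ℤ (TT A B) := Module.Finite.tensorProduct ℤ _ _
  refine Module.finite_of_fg_torsion _ ?_
  intro t
  have hcard : (Nat.card (Abelianization A) : ℤ) ≠ 0 := by
    exact_mod_cast Nat.card_ne_zero.mpr ⟨inferInstance, inferInstance⟩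
  refine ⟨⟨(Nat.card (Abelianization A) : ℤ), mem_nonZeroDivisors_of_ne_zero hcard⟩, ?_⟩
  show (Nat.card (Abelianization A) : ℤ) • t = 0
  induction t using TensorProduct.induction_on with
  | zero => simp
  | tmul u v =>
      rw [TensorProduct.smul_tmul']
      have hu : (Nat.card (Abelianization A) : ℤ) • u = 0 := by
        have h1 : u.toMul ^ (Nat.card (Abelianization A)) = 1 := pow_card_eq_one'
        rw [natCast_zsmul]
        exact_mod_cast congrArg Additive.ofMul h1
      rw [hu, TensorProduct.zero_tmul]
  | add s t hs ht => rw [smul_add, hs, ht, add_zero]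

end SchurAux

/-- Schur's theorem on the multiplier of a direct product: for finite groups `A` and `B`,
`M(A × B) ≅ M(A) × M(B) × (A/A' ⊗_ℤ B/B')`, where `M(G) = H²(G, ℂ^*)` is the Schur
multiplier and the last factor is the tensor product of the abelianizations. -/
theorem schur_multiplier_prod (A B : Type) [Group A] [Group B] [Fintype A] [Fintype B] :
    Nonempty (H2 (A × B) ℂˣ ≃*
      H2 A ℂˣ × H2 B ℂˣ ×
        Multiplicative
          (TensorProduct ℤ (Additive (Abelianization A)) (Additive (Abelianization B)))) := by
  have hfin : Finite (SchurAux.TT A B) := SchurAux.finite_TT A B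
  have hexp : NeZero ((Monoid.exponent (Multiplicative (SchurAux.TT A B)) : ℂ)) := by
    have h := Monoid.exponent_ne_zero_of_finite (G := Multiplicative (SchurAux.TT A B))
    exact ⟨by exact_mod_cast h⟩
  obtain ⟨e2⟩ :=
    CommGroup.monoidHom_mulEquiv_of_hasEnoughRootsOfUnity (Multiplicative (SchurAux.TT A B)) ℂ
  have eP : SchurAux.pairingSet A B ≃* Multiplicative (SchurAux.TT A B) :=

    (MulEquiv.ofBijective (SchurAux.charHom A B)
      ⟨SchurAux.charHom_injective A B, SchurAux.charHom_surjective A B⟩).trans e2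
  have e1 : H2 (A × B) ℂˣ ≃* H2 A ℂˣ × H2 B ℂˣ × SchurAux.pairingSet A B :=
    (MulEquiv.ofBijective (SchurAux.bigPsi A B)
      ⟨SchurAux.bigPsi_injective A B, SchurAux.bigPsi_surjective A B⟩).symm
  have e4 : (H2 A ℂˣ × H2 B ℂˣ × SchurAux.pairingSet A B) ≃*
      (H2 A ℂˣ × H2 B ℂˣ × Multiplicative (SchurAux.TT A B)) :=
    { toFun := fun x => (x.1, x.2.1, eP x.2.2)
      invFun := fun x => (x.1, x.2.1, eP.symm x.2.2)
      left_inv := fun x => by simp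
      right_inv := fun x => by simp
      map_mul' := fun x y => Prod.ext rfl (Prod.ext rfl (map_mul eP _ _)) }
  exact ⟨e1.trans e4⟩
end

section
/- Let q be a prime, let Q be the Heisenberg group of order q³ and exponent q (for q odd), generated by τ, σ, ρ with τ^q = σ^q = ρ^q = 1, τ central, and σ^ρ = τσ. Let w be an integer with w² ≢ 1 mod q, and let π act on Q by ρ^π = ρ, σ^π = σ^w, τ^π = τ^w. Then the induced action of π on the Schur multiplier M(Q) ≅ C_q × C_q has no nonzero fixed points; equivalently M(Q)^{⟨π⟩} = 1. -/
/-- The action of an automorphism `φ` of `G` on 2-cocycles: `α ↦ α ∘ (φ × φ)`. -/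
def cocycleComp (G M : Type) [Group G] [CommGroup M] (φ : G ≃* G) :
    ↥(cocycleSet G M) →* ↥(cocycleSet G M) where
  toFun a := ⟨fun p => (a : (G × G) → M) (φ p.1, φ p.2), by
    intro g h k
    simpa using a.2 (φ g) (φ h) (φ k)⟩
  map_one' := by ext p; rfl
  map_mul' := by intro a c; ext p; rfl

/-- The induced action of an automorphism `φ` of `G` on `H²(G, M)`. -/
def H2map (G M : Type) [Group G] [CommGroup M] (φ : G ≃* G) : H2 G M →* H2 G M :=
  QuotientGroup.map _ _ (cocycleComp G M φ) (by
    intro a ha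
    rw [Subgroup.mem_comap, Subgroup.mem_subgroupOf] at *
    obtain ⟨μ, hμ⟩ := ha
    refine ⟨μ ∘ ⇑φ, ?_⟩
    funext p
    have h1 := congrFun hμ (φ p.1, φ p.2)
    simp only [coboundaryHom, MonoidHom.coe_mk, OneHom.coe_mk, Function.comp_apply] at h1 ⊢
    rw [← map_mul φ] at h1
    rw [h1]
    rfl)

/-- The subgroup of `H²(G, M)` of classes fixed by every automorphism in `S`. -/
def H2fixed (G M : Type) [Group G] [CommGroup M] (S : Set (G ≃* G)) :
    Subgroup (H2 G M) where
  carrier := {c | ∀ φ ∈ S, H2map G M φ c = c}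
  one_mem' := by intro φ hφ; simp
  mul_mem' := by intro a c ha hc φ hφ; simp [map_mul, ha φ hφ, hc φ hφ]
  inv_mem' := by intro a ha φ hφ; simp [map_inv, ha φ hφ]

/-- The Heisenberg group of order `q³` and exponent `q` (for `q` an odd prime):
triples `(a, b, c)` representing `τ^a σ^b ρ^c` with `τ` central and `σ^ρ = τσ`. -/
def Heis (q : ℕ) : Type := ZMod q × ZMod q × ZMod q

instance (q : ℕ) : Group (Heis q) where
  mul x y := (x.1 + y.1 - x.2.2 * y.2.1, x.2.1 + y.2.1, x.2.2 + y.2.2)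
  one := (0, 0, 0)
  inv x := (-x.1 - x.2.2 * x.2.1, -x.2.1, -x.2.2)
  mul_assoc := by
    rintro ⟨a, b, c⟩ ⟨a', b', c'⟩ ⟨a'', b'', c''⟩
    refine Prod.ext ?_ (Prod.ext ?_ ?_)
    · show (a + a' - c * b') + a'' - (c + c') * b''
        = a + (a' + a'' - c' * b'') - c * (b' + b'')
      ring
    · show (b + b') + b'' = b + (b' + b'')
      ring
    · show (c + c') + c'' = c + (c' + c'')
      ring
  one_mul := by
    rintro ⟨a, b, c⟩
    refine Prod.ext ?_ (Prod.ext ?_ ?_)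
    · show (0 : ZMod q) + a - 0 * b = a
      ring
    · show (0 : ZMod q) + b = b
      ring
    · show (0 : ZMod q) + c = c
      ring
  mul_one := by
    rintro ⟨a, b, c⟩
    refine Prod.ext ?_ (Prod.ext ?_ ?_)
    · show a + 0 - c * 0 = a
      ring
    · show b + (0 : ZMod q) = b
      ring
    · show c + (0 : ZMod q) = c
      ring
  inv_mul_cancel := by
    rintro ⟨a, b, c⟩
    refine Prod.ext ?_ (Prod.ext ?_ ?_)
    · show (-a - c * b) + a - (-c) * b = 0
      ring
    · show -b + b = (0 : ZMod q)
      ring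
    · show -c + c = (0 : ZMod q)
      ring

/-- The element `τ = (1,0,0)` (central) of the Heisenberg group. -/
def Heis.tau (q : ℕ) : Heis q := ((1 : ZMod q), 0, 0)

/-- The element `σ = (0,1,0)` of the Heisenberg group. -/
def Heis.sigma (q : ℕ) : Heis q := (0, (1 : ZMod q), 0)

/-- The element `ρ = (0,0,1)` of the Heisenberg group; it satisfies `σ^ρ = τσ`. -/
def Heis.rho (q : ℕ) : Heis q := (0, 0, (1 : ZMod q))

/-- The automorphism `π` of the Heisenberg group determined by `ρ^π = ρ`,
`σ^π = σ^w`, `τ^π = τ^w` for a unit `w` mod `q`. -/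
def heisAut (q : ℕ) (w : (ZMod q)ˣ) : Heis q ≃* Heis q where
  toFun x := ((w : ZMod q) * x.1, (w : ZMod q) * x.2.1, x.2.2)
  invFun x := (((w⁻¹ : (ZMod q)ˣ) : ZMod q) * x.1, ((w⁻¹ : (ZMod q)ˣ) : ZMod q) * x.2.1, x.2.2)
  left_inv := by
    intro x
    refine Prod.ext ?_ (Prod.ext ?_ ?_) <;>
      simp [← mul_assoc, ← Units.val_mul]
  right_inv := by
    intro x
    refine Prod.ext ?_ (Prod.ext ?_ ?_) <;>
      simp [← mul_assoc, ← Units.val_mul]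
  map_mul' := by
    rintro ⟨a, b, c⟩ ⟨a', b', c'⟩
    refine Prod.ext ?_ (Prod.ext ?_ ?_)
    · show (w : ZMod q) * (a + a' - c * b')
        = (w : ZMod q) * a + (w : ZMod q) * a' - c * ((w : ZMod q) * b')
      ring
    · show (w : ZMod q) * (b + b') = (w : ZMod q) * b + (w : ZMod q) * b'
      ring
    · show c + c' = c + c'
      rfl

namespace Dade
variable {G : Type} [Group G]

def IsCocycle (f : G × G → ℂˣ) : Prop :=
  ∀ g h k : G, f (g, h) * f (g * h, k) = f (g, h * k) * f (h, k)

lemma one_left {f : G × G → ℂˣ} (hf : IsCocycle f) (g : G) : f (1, g) = f (1, 1) := by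
  have h := hf 1 1 g
  simp only [one_mul] at h
  exact (mul_right_cancel h).symm

lemma one_right {f : G × G → ℂˣ} (hf : IsCocycle f) (g : G) : f (g, 1) = f (1, 1) := by
  have h := hf g 1 1
  simp only [mul_one, one_mul] at h
  exact mul_left_cancel h

lemma cocycle_isCocycle (a : ↥(cocycleSet G ℂˣ)) : IsCocycle (a : (G × G) → ℂˣ) :=
  fun g h k => a.2 g h k

/-- the central extension of `G` by `ℂˣ` determined by a 2-cocycle -/
@[ext] structure Ext (a : ↥(cocycleSet G ℂˣ)) where
  z : ℂˣ
  g : G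

namespace Ext

variable {a : ↥(cocycleSet G ℂˣ)}

local notation "F" => (a : (G × G) → ℂˣ)

instance : Group (Ext a) where
  mul x y := ⟨x.z * y.z * F (x.g, y.g), x.g * y.g⟩
  one := ⟨(F (1, 1))⁻¹, 1⟩
  inv x := ⟨(F (1, 1))⁻¹ * x.z⁻¹ * (F (x.g⁻¹, x.g))⁻¹, x.g⁻¹⟩
  mul_assoc x y w := by
    have e := congrArg Units.val (a.2 x.g y.g w.g)
    refine Ext.ext ?_ (mul_assoc _ _ _)
    show x.z * y.z * F (x.g, y.g) * w.z * F (x.g * y.g, w.g)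
      = x.z * (y.z * w.z * F (y.g, w.g)) * F (x.g, y.g * w.g)
    simp only [Units.ext_iff, Units.val_mul] at *
    linear_combination (x.z * y.z * w.z : ℂ) * e
  one_mul x := by
    refine Ext.ext ?_ (one_mul _)
    show (F (1, 1))⁻¹ * x.z * F (1, x.g) = x.z
    rw [one_left (cocycle_isCocycle a) x.g, mul_comm _ x.z, mul_assoc, inv_mul_cancel, mul_one]
  mul_one x := by
    refine Ext.ext ?_ (mul_one _)
    show x.z * (F (1, 1))⁻¹ * F (x.g, 1) = x.z
    rw [one_right (cocycle_isCocycle a) x.g, mul_assoc, inv_mul_cancel, mul_one]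
  inv_mul_cancel x := by
    refine Ext.ext ?_ (inv_mul_cancel _)
    show (F (1, 1))⁻¹ * x.z⁻¹ * (F (x.g⁻¹, x.g))⁻¹ * x.z * F (x.g⁻¹, x.g) = (F (1, 1))⁻¹
    simp only [Units.ext_iff, Units.val_mul, Units.val_inv_eq_inv_val]
    field_simp

@[simp] lemma mul_z (x y : Ext a) : (x * y).z = x.z * y.z * F (x.g, y.g) := rfl
@[simp] lemma mul_g (x y : Ext a) : (x * y).g = x.g * y.g := rfl
@[simp] lemma one_z : (1 : Ext a).z = (F (1, 1))⁻¹ := rfl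
@[simp] lemma one_g : (1 : Ext a).g = 1 := rfl

@[simp] lemma pow_g (x : Ext a) (n : ℕ) : (x ^ n).g = x.g ^ n := by
  induction n with
  | zero => simp
  | succ n ih => rw [pow_succ, pow_succ, mul_g, ih]

@[simp] lemma inv_g (x : Ext a) : (x⁻¹).g = x.g⁻¹ := rfl

lemma pow_z (c : ℂˣ) (g : G) (n : ℕ) :
    ((⟨c, g⟩ : Ext a) ^ n).z = c ^ n * ((⟨1, g⟩ : Ext a) ^ n).z := by
  induction n with
  | zero => simp
  | succ n ih =>
    simp only [pow_succ, mul_z, ih, pow_g]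
    simp [mul_comm, mul_assoc, mul_left_comm, pow_succ]

end Ext
end Dade
namespace Dade
variable {G : Type} [Group G] {f : G × G → ℂˣ}

/-- the commutator pairing -/
def pair (f : G × G → ℂˣ) (g h : G) : ℂˣ := f (g, h) * (f (h, g))⁻¹

omit [Group G] in
lemma pair_self (g : G) : pair f g g = 1 := mul_inv_cancel _

omit [Group G] in
lemma pair_swap (g h : G) : pair f g h = (pair f h g)⁻¹ := by
  simp [pair, mul_comm]

lemma pair_one (hf : IsCocycle f) (g : G) : pair f g 1 = 1 := by
  rw [pair, one_left hf, one_right hf, mul_inv_cancel]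

lemma pair_mul (hf : IsCocycle f) {g h k : G} (hgh : g * h = h * g) (hgk : g * k = k * g) :
    pair f g (h * k) = pair f g h * pair f g k := by
  have e1 := congrArg Units.val (hf g h k)
  have e2 := congrArg Units.val (hf h g k)
  have e3 := congrArg Units.val (hf h k g)
  rw [← hgh, hgk] at e2
  simp only [Units.val_mul] at e1 e2 e3
  have key : (↑(f (g, h * k)) : ℂ) * ↑(f (h, g)) * ↑(f (k, g))
      = ↑(f (g, h)) * ↑(f (g, k)) * ↑(f (h * k, g)) := by
    apply mul_left_cancel₀ (Units.ne_zero (f (h, k)))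
    linear_combination (-(↑(f (h, g)) * ↑(f (k, g))) : ℂ) * e1
      + (↑(f (g, h)) * ↑(f (k, g)) : ℂ) * e2
      - (↑(f (g, h)) * ↑(f (g, k)) : ℂ) * e3
  simp only [pair, Units.ext_iff, Units.val_mul, Units.val_inv_eq_inv_val]
  field_simp
  linear_combination key

lemma pair_pow (hf : IsCocycle f) {g h : G} (hgh : g * h = h * g) (n : ℕ) :
    pair f g (h ^ n) = (pair f g h) ^ n := by
  induction n with
  | zero => simpa using pair_one hf g
  | succ n ih =>
    have hc : Commute g (h ^ n) := (Commute.pow_right hgh n)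
    rw [pow_succ, pair_mul hf hc.eq hgh, ih, pow_succ]

lemma pair_pow_left (hf : IsCocycle f) {g h : G} (hgh : g * h = h * g) (m : ℕ) :
    pair f (g ^ m) h = (pair f g h) ^ m := by
  rw [pair_swap, pair_pow hf hgh.symm m, pair_swap g h, inv_pow]

lemma pair_pow_pow (hf : IsCocycle f) {g h : G} (hgh : g * h = h * g) (m n : ℕ) :
    pair f (g ^ m) (h ^ n) = (pair f g h) ^ (m * n) := by
  have hc : g ^ m * h = h * g ^ m := ((Commute.pow_left hgh m) : _)
  rw [pair_pow hf hc n, pair_pow_left hf hgh m, ← pow_mul]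

end Dade
namespace Dade

lemma exists_root (u : ℂˣ) {n : ℕ} (hn : n ≠ 0) : ∃ z : ℂˣ, z ^ n = u := by
  obtain ⟨c, hc⟩ := IsAlgClosed.exists_pow_nat_eq (k := ℂ) (u : ℂ) (Nat.pos_of_ne_zero hn)
  have hc0 : c ≠ 0 := by
    intro h
    rw [h, zero_pow hn] at hc
    exact u.ne_zero hc.symm
  exact ⟨Units.mk0 c hc0, Units.ext (by simpa using hc)⟩

variable {G : Type} [Group G] {a : ↥(cocycleSet G ℂˣ)}

namespace Ext

local notation "F" => (a : (G × G) → ℂˣ)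

lemma commute_of (x : Ext a) (hg : ∀ h : G, x.g * h = h * x.g)
    (ha : ∀ h : G, F (x.g, h) = F (h, x.g)) (y : Ext a) : Commute x y := by
  show x * y = y * x
  refine Ext.ext ?_ (hg y.g)
  show x.z * y.z * F (x.g, y.g) = y.z * x.z * F (y.g, x.g)
  rw [ha y.g, mul_comm x.z y.z]

lemma pow_mod {q : ℕ} (x : Ext a) (hx : x ^ q = 1) {m n : ℕ}
    (h : (m : ZMod q) = (n : ZMod q)) : x ^ m = x ^ n := by
  have hdvd : orderOf x ∣ q := orderOf_dvd_of_pow_eq_one hx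
  have hmod : m ≡ n [MOD q] := (ZMod.natCast_eq_natCast_iff m n q).mp h
  exact (pow_eq_pow_iff_modEq.mpr (hmod.of_dvd hdvd))

end Ext
end Dade
namespace Dade

variable {q : ℕ}

/-- constructor for Heisenberg elements -/
def hmk (x y z : ZMod q) : Heis q := (x, y, z)

lemma hmk_surj (g : Heis q) : g = hmk g.1 g.2.1 g.2.2 := rfl

lemma heis_mul (u v : Heis q) :
    u * v = hmk (u.1 + v.1 - u.2.2 * v.2.1) (u.2.1 + v.2.1) (u.2.2 + v.2.2) := rfl

lemma heis_one : (1 : Heis q) = hmk 0 0 0 := rfl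

lemma heis_inv (g : Heis q) : g⁻¹ = hmk (-g.1 - g.2.2 * g.2.1) (-g.2.1) (-g.2.2) := rfl

lemma hmk_mul (x y z x' y' z' : ZMod q) :
    hmk x y z * hmk x' y' z' = hmk (x + x' - z * y') (y + y') (z + z') := rfl

@[simp] lemma hmk_fst (x y z : ZMod q) : (hmk x y z).1 = x := rfl
@[simp] lemma hmk_snd1 (x y z : ZMod q) : (hmk x y z).2.1 = y := rfl
@[simp] lemma hmk_snd2 (x y z : ZMod q) : (hmk x y z).2.2 = z := rfl

lemma hmk_inj {x y z x' y' z' : ZMod q} (h1 : x = x') (h2 : y = y') (h3 : z = z') :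
    hmk x y z = hmk x' y' z' := by rw [h1, h2, h3]

lemma tau_eq : Heis.tau q = hmk 1 0 0 := rfl
lemma sigma_eq : Heis.sigma q = hmk 0 1 0 := rfl
lemma rho_eq : Heis.rho q = hmk 0 0 1 := rfl

lemma heis_central (w : ZMod q) (g : Heis q) : hmk w 0 0 * g = g * hmk w 0 0 := by
  rw [hmk_surj g, hmk_mul, hmk_mul]
  exact hmk_inj (by ring) (by ring) (by ring)

lemma tau_pow (n : ℕ) : (Heis.tau q) ^ n = hmk (n : ZMod q) 0 0 := by
  induction n with
  | zero => rw [pow_zero, heis_one]; exact hmk_inj (by push_cast; ring) rfl rfl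
  | succ n ih =>
    rw [pow_succ, ih, tau_eq, hmk_mul]
    exact hmk_inj (by push_cast; ring) (by ring) (by ring)

lemma sigma_pow (n : ℕ) : (Heis.sigma q) ^ n = hmk 0 (n : ZMod q) 0 := by
  induction n with
  | zero => rw [pow_zero, heis_one]; exact hmk_inj rfl (by push_cast; ring) rfl
  | succ n ih =>
    rw [pow_succ, ih, sigma_eq, hmk_mul]
    exact hmk_inj (by push_cast; ring) (by push_cast; ring) (by ring)

lemma rho_pow (n : ℕ) : (Heis.rho q) ^ n = hmk 0 0 (n : ZMod q) := by
  induction n with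
  | zero => rw [pow_zero, heis_one]; exact hmk_inj rfl rfl (by push_cast; ring)
  | succ n ih =>
    rw [pow_succ, ih, rho_eq, hmk_mul]
    exact hmk_inj (by push_cast; ring) (by ring) (by push_cast; ring)

lemma heis_decomp [NeZero q] (g : Heis q) :
    g = (Heis.tau q) ^ (g.1.val) * (Heis.sigma q) ^ (g.2.1.val) * (Heis.rho q) ^ (g.2.2.val) := by
  rw [tau_pow, sigma_pow, rho_pow, hmk_mul, hmk_mul, hmk_surj g]
  exact hmk_inj (by simp [ZMod.natCast_val, ZMod.cast_id]) (by simp [ZMod.natCast_val, ZMod.cast_id])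
    (by simp [ZMod.natCast_val, ZMod.cast_id])

lemma sigma_pow_q : (Heis.sigma q) ^ q = 1 := by
  rw [sigma_pow, heis_one]; exact hmk_inj rfl (by simp) rfl

lemma rho_pow_q : (Heis.rho q) ^ q = 1 := by
  rw [rho_pow, heis_one]; exact hmk_inj rfl rfl (by simp)

lemma tau_pow_q : (Heis.tau q) ^ q = 1 := by
  rw [tau_pow, heis_one]; exact hmk_inj (by simp) rfl rfl

lemma heis_comm_rel : (Heis.sigma q)⁻¹ * (Heis.rho q)⁻¹ * Heis.sigma q * Heis.rho q
    = Heis.tau q := by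
  rw [sigma_eq, rho_eq, tau_eq, heis_inv, heis_inv]
  simp only [hmk_fst, hmk_snd1, hmk_snd2]
  rw [hmk_mul, hmk_mul, hmk_mul]
  exact hmk_inj (by ring) (by ring) (by ring)

end Dade
namespace Dade

variable {q : ℕ}

lemma heis_split (hq : q ≠ 0) (a : ↥(cocycleSet (Heis q) ℂˣ))
    (htau : ∀ g : Heis q, (a : (Heis q × Heis q) → ℂˣ) (Heis.tau q, g)
      = (a : (Heis q × Heis q) → ℂˣ) (g, Heis.tau q)) :
    ∃ μ : Heis q → ℂˣ, coboundaryHom (Heis q) ℂˣ μ = (a : (Heis q × Heis q) → ℂˣ) := by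
  haveI : NeZero q := ⟨hq⟩
  set F : (Heis q × Heis q) → ℂˣ := (a : (Heis q × Heis q) → ℂˣ) with hF
  -- the lift of sigma with s^q = 1
  obtain ⟨zs, hzs⟩ := exists_root
    ((((⟨1, Heis.sigma q⟩ : Ext a) ^ q).z)⁻¹ * (F (1, 1))⁻¹) hq
  set s : Ext a := ⟨zs, Heis.sigma q⟩ with hs
  have hsg : s.g = Heis.sigma q := rfl
  have hsq : s ^ q = 1 := by
    refine Ext.ext ?_ ?_
    · rw [Ext.pow_z, hzs, Ext.one_z]
      simp only [Units.ext_iff, Units.val_mul, Units.val_inv_eq_inv_val]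
      field_simp
      rfl
    · rw [Ext.pow_g, Ext.one_g, hsg, sigma_pow_q]
  -- the lift of rho with r^q = 1
  obtain ⟨zr, hzr⟩ := exists_root
    ((((⟨1, Heis.rho q⟩ : Ext a) ^ q).z)⁻¹ * (F (1, 1))⁻¹) hq
  set r : Ext a := ⟨zr, Heis.rho q⟩ with hr
  have hrg : r.g = Heis.rho q := rfl
  have hrq : r ^ q = 1 := by
    refine Ext.ext ?_ ?_
    · rw [Ext.pow_z, hzr, Ext.one_z]
      simp only [Units.ext_iff, Units.val_mul, Units.val_inv_eq_inv_val]
      field_simp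
      rfl
    · rw [Ext.pow_g, Ext.one_g, hrg, rho_pow_q]
  -- the commutator t, a lift of tau
  set t : Ext a := s⁻¹ * r⁻¹ * s * r with ht
  have htg : t.g = Heis.tau q := by
    rw [ht]
    show s.g⁻¹ * r.g⁻¹ * s.g * r.g = Heis.tau q
    rw [hsg, hrg, heis_comm_rel]
  have htc : ∀ y : Ext a, Commute t y := by
    intro y
    refine Ext.commute_of t ?_ ?_ y
    · rw [htg]
      intro h
      rw [tau_eq]; exact heis_central 1 h
    · rw [htg]
      exact htau
  have hcent : ∀ (n : ℕ) (y : Ext a), t ^ n * y = y * t ^ n :=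
    fun n y => ((htc y).pow_left n).eq
  have hcentinv : ∀ (n : ℕ) (y : Ext a), (t⁻¹) ^ n * y = y * (t⁻¹) ^ n :=
    fun n y => (((htc y).inv_left).pow_left n).eq
  have hrs : s * r = r * s * t := by rw [ht]; group
  have hsr : r * s = s * r * t⁻¹ := by rw [hrs]; group
  -- t^q = 1
  have hkey : ∀ n : ℕ, r⁻¹ * s ^ n * r = s ^ n * t ^ n := by
    intro n
    induction n with
    | zero => group
    | succ n ih =>
      have h1 : r⁻¹ * s ^ (n + 1) * r = (r⁻¹ * s ^ n * r) * (r⁻¹ * s * r) := by group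
      have h2 : r⁻¹ * s * r = s * t := by rw [mul_assoc, hrs]; group
      rw [h1, ih, h2, pow_succ, pow_succ, mul_assoc, ← mul_assoc (t ^ n) s t,
        hcent n s, mul_assoc, mul_assoc]
  have htq : t ^ q = 1 := by
    have := hkey q
    rw [hsq, mul_one, inv_mul_cancel, one_mul] at this
    exact this.symm
  -- commutation rules for powers
  have hrsn : ∀ b : ℕ, r * s ^ b = s ^ b * r * (t⁻¹) ^ b := by
    intro b
    induction b with
    | zero => group
    | succ b ih =>
      conv_lhs => rw [pow_succ, ← mul_assoc, ih, mul_assoc (s ^ b * r) (t⁻¹ ^ b) s,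
        hcentinv b s, ← mul_assoc, mul_assoc (s ^ b) r s, hsr]
      group
  have hrcn : ∀ (c b : ℕ), r ^ c * s ^ b = s ^ b * r ^ c * ((t⁻¹) ^ b) ^ c := by
    intro c b
    induction c with
    | zero => group
    | succ c ih =>
      have hTr : ((t⁻¹) ^ b) ^ c * r = r * ((t⁻¹) ^ b) ^ c :=
        (((htc r).inv_left.pow_left b).pow_left c).eq
      conv_lhs => rw [pow_succ, mul_assoc, hrsn b, ← mul_assoc, ← mul_assoc, ih,
        mul_assoc (s ^ b * r ^ c) ((t⁻¹ ^ b) ^ c) r, hTr]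
      group
  -- the splitting map
  obtain ⟨φ, hφg, hom⟩ : ∃ φ : Heis q → Ext a,
      (∀ g : Heis q, (φ g).g = g) ∧ (∀ u v : Heis q, φ (u * v) = φ u * φ v) := by
    refine ⟨fun g => t ^ g.1.val * s ^ g.2.1.val * r ^ g.2.2.val, ?_, ?_⟩
    · intro g
      show (t ^ g.1.val * s ^ g.2.1.val * r ^ g.2.2.val).g = g
      rw [Ext.mul_g, Ext.mul_g, Ext.pow_g, Ext.pow_g, Ext.pow_g, htg, hsg, hrg]
      exact (heis_decomp g).symm
    · intro u v
      have hsBB : s ^ (u * v).2.1.val = s ^ (u.2.1.val + v.2.1.val) := by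
        refine Ext.pow_mod s hsq ?_
        simp only [Nat.cast_add, ZMod.natCast_val, ZMod.cast_id, heis_mul,
          hmk_fst, hmk_snd1, hmk_snd2]
      have hrCC : r ^ (u * v).2.2.val = r ^ (u.2.2.val + v.2.2.val) := by
        refine Ext.pow_mod r hrq ?_
        simp only [Nat.cast_add, ZMod.natCast_val, ZMod.cast_id, heis_mul,
          hmk_fst, hmk_snd1, hmk_snd2]
      have htAA : t ^ ((u * v).1.val + v.2.1.val * u.2.2.val)
          = t ^ (u.1.val + v.1.val) := by
        refine Ext.pow_mod t htq ?_
        simp only [Nat.cast_add, Nat.cast_mul, ZMod.natCast_val, ZMod.cast_id, heis_mul,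
          hmk_fst, hmk_snd1, hmk_snd2]
        ring
      have htfix : t ^ (u.1.val + v.1.val) * (t⁻¹) ^ (v.2.1.val * u.2.2.val)
          = t ^ (u * v).1.val := by
        rw [inv_pow, ← htAA, pow_add, mul_assoc, mul_inv_cancel, mul_one]
      have hNF : (t ^ u.1.val * s ^ u.2.1.val * r ^ u.2.2.val)
          * (t ^ v.1.val * s ^ v.2.1.val * r ^ v.2.2.val)
          = t ^ (u.1.val + v.1.val) * ((t⁻¹) ^ (v.2.1.val * u.2.2.val)
          * (s ^ (u.2.1.val + v.2.1.val) * r ^ (u.2.2.val + v.2.2.val))) := by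
        calc (t ^ u.1.val * s ^ u.2.1.val * r ^ u.2.2.val)
              * (t ^ v.1.val * s ^ v.2.1.val * r ^ v.2.2.val)
            = t ^ u.1.val * (s ^ u.2.1.val * ((r ^ u.2.2.val * t ^ v.1.val)
                * (s ^ v.2.1.val * r ^ v.2.2.val))) := by
              simp only [mul_assoc]
          _ = t ^ u.1.val * (s ^ u.2.1.val * ((t ^ v.1.val * r ^ u.2.2.val)
                * (s ^ v.2.1.val * r ^ v.2.2.val))) := by
              rw [← hcent v.1.val (r ^ u.2.2.val)]
          _ = t ^ u.1.val * ((s ^ u.2.1.val * t ^ v.1.val) * (r ^ u.2.2.val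
                * (s ^ v.2.1.val * r ^ v.2.2.val))) := by
              simp only [mul_assoc]
          _ = t ^ u.1.val * ((t ^ v.1.val * s ^ u.2.1.val) * (r ^ u.2.2.val
                * (s ^ v.2.1.val * r ^ v.2.2.val))) := by
              rw [← hcent v.1.val (s ^ u.2.1.val)]
          _ = (t ^ u.1.val * t ^ v.1.val) * (s ^ u.2.1.val * ((r ^ u.2.2.val
                * s ^ v.2.1.val) * r ^ v.2.2.val)) := by
              simp only [mul_assoc]
          _ = t ^ (u.1.val + v.1.val) * (s ^ u.2.1.val * ((s ^ v.2.1.val * r ^ u.2.2.val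
                * ((t⁻¹) ^ v.2.1.val) ^ u.2.2.val) * r ^ v.2.2.val)) := by
              rw [← pow_add t, hrcn u.2.2.val v.2.1.val]
          _ = t ^ (u.1.val + v.1.val) * (s ^ u.2.1.val * (s ^ v.2.1.val * (r ^ u.2.2.val
                * ((t⁻¹) ^ (v.2.1.val * u.2.2.val) * r ^ v.2.2.val)))) := by
              rw [← pow_mul]
              simp only [mul_assoc]
          _ = t ^ (u.1.val + v.1.val) * (s ^ u.2.1.val * (s ^ v.2.1.val * (r ^ u.2.2.val
                * (r ^ v.2.2.val * (t⁻¹) ^ (v.2.1.val * u.2.2.val))))) := by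
              rw [hcentinv (v.2.1.val * u.2.2.val) (r ^ v.2.2.val)]
          _ = t ^ (u.1.val + v.1.val) * ((s ^ u.2.1.val * s ^ v.2.1.val)
                * ((r ^ u.2.2.val * r ^ v.2.2.val) * (t⁻¹) ^ (v.2.1.val * u.2.2.val))) := by
              simp only [mul_assoc]
          _ = t ^ (u.1.val + v.1.val) * (s ^ (u.2.1.val + v.2.1.val)
                * (r ^ (u.2.2.val + v.2.2.val) * (t⁻¹) ^ (v.2.1.val * u.2.2.val))) := by
              rw [← pow_add s, ← pow_add r]
          _ = t ^ (u.1.val + v.1.val) * (s ^ (u.2.1.val + v.2.1.val)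
                * ((t⁻¹) ^ (v.2.1.val * u.2.2.val) * r ^ (u.2.2.val + v.2.2.val))) := by
              rw [← hcentinv (v.2.1.val * u.2.2.val) (r ^ (u.2.2.val + v.2.2.val))]
          _ = t ^ (u.1.val + v.1.val) * ((s ^ (u.2.1.val + v.2.1.val)
                * (t⁻¹) ^ (v.2.1.val * u.2.2.val)) * r ^ (u.2.2.val + v.2.2.val)) := by
              simp only [mul_assoc]
          _ = t ^ (u.1.val + v.1.val) * (((t⁻¹) ^ (v.2.1.val * u.2.2.val)
                * s ^ (u.2.1.val + v.2.1.val)) * r ^ (u.2.2.val + v.2.2.val)) := by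
              rw [← hcentinv (v.2.1.val * u.2.2.val) (s ^ (u.2.1.val + v.2.1.val))]
          _ = t ^ (u.1.val + v.1.val) * ((t⁻¹) ^ (v.2.1.val * u.2.2.val)
                * (s ^ (u.2.1.val + v.2.1.val) * r ^ (u.2.2.val + v.2.2.val))) := by
              simp only [mul_assoc]
      show t ^ (u * v).1.val * s ^ (u * v).2.1.val * r ^ (u * v).2.2.val
        = (t ^ u.1.val * s ^ u.2.1.val * r ^ u.2.2.val)
          * (t ^ v.1.val * s ^ v.2.1.val * r ^ v.2.2.val)
      rw [hNF, hsBB, hrCC, ← mul_assoc, htfix]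
      simp only [mul_assoc]
  refine ⟨fun g => ((φ g).z)⁻¹, ?_⟩
  funext p
  show ((φ p.1).z)⁻¹ * ((φ p.2).z)⁻¹ * (((φ (p.1 * p.2)).z)⁻¹)⁻¹ = F p
  rw [hom p.1 p.2, Ext.mul_z, hφg, hφg, inv_inv]
  have : F (p.1, p.2) = F p := rfl
  rw [← this]
  simp only [Units.ext_iff, Units.val_mul, Units.val_inv_eq_inv_val]
  field_simp
  rfl

end Dade
namespace Dade

lemma root_triv {q : ℕ} (hq : q.Prime) {ζ : ℂˣ} (h1 : ζ ^ q = 1) {n : ℕ}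
    (h2 : ζ ^ n = ζ) (h3 : ((n : ZMod q)) ≠ 1) : ζ = 1 := by
  by_contra hζ
  have hdvd : orderOf ζ ∣ q := orderOf_dvd_of_pow_eq_one h1
  have hord : orderOf ζ = q := by
    rcases (Nat.Prime.eq_one_or_self_of_dvd hq _ hdvd) with h | h
    · exact absurd (orderOf_eq_one_iff.mp h) hζ
    · exact h
  have hmod : n ≡ 1 [MOD orderOf ζ] := by
    have h2' : ζ ^ n = ζ ^ 1 := by rw [pow_one]; exact h2
    exact pow_eq_pow_iff_modEq.mp h2'
  rw [hord] at hmod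
  have : ((n : ℕ) : ZMod q) = ((1 : ℕ) : ZMod q) := (ZMod.natCast_eq_natCast_iff _ _ _).mpr hmod
  rw [Nat.cast_one] at this
  exact h3 this

end Dade

/-- Dade's example, key step: let `q` be an odd prime, `Q` the Heisenberg group of
order `q³` and exponent `q`, and `w` a unit mod `q` with `w² ≢ 1 mod q`. Then the
automorphism `π : ρ ↦ ρ, σ ↦ σ^w, τ ↦ τ^w` acts on the Schur multiplier
`M(Q) ≅ C_q × C_q` without nonzero fixed points: `M(Q)^⟨π⟩ = 1`. -/

theorem heis_multiplier_no_fixed_points (q : ℕ) (hq : q.Prime) (hodd : Odd q)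
    (w : (ZMod q)ˣ) (hw : ((w : ZMod q)) ^ 2 ≠ 1) :
    H2fixed (Heis q) ℂˣ {heisAut q w} = ⊥ := by
  haveI : NeZero q := ⟨hq.ne_zero⟩
  rw [Subgroup.eq_bot_iff_forall]
  intro c hc
  obtain ⟨a, rfl⟩ := QuotientGroup.mk_surjective c
  have hfix : H2map (Heis q) ℂˣ (heisAut q w) (QuotientGroup.mk a) = QuotientGroup.mk a :=
    hc (heisAut q w) rfl
  rw [H2map, QuotientGroup.map_mk, QuotientGroup.eq, Subgroup.mem_subgroupOf] at hfix
  obtain ⟨μ, hμ⟩ := hfix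
  set F : (Heis q × Heis q) → ℂˣ := (a : (Heis q × Heis q) → ℂˣ) with hFdef
  have hF : Dade.IsCocycle F := Dade.cocycle_isCocycle a
  set π : Heis q ≃* Heis q := heisAut q w with hπdef
  have hμ' : ∀ g h : Heis q, μ g * μ h * (μ (g * h))⁻¹ = (F (π g, π h))⁻¹ * F (g, h) := by
    intro g h
    exact congrFun hμ (g, h)
  -- the pairing is invariant under π on commuting pairs
  have hpinv : ∀ g h : Heis q, g * h = h * g →
      Dade.pair F (π g) (π h) = Dade.pair F g h := by
    intro g h hgh
    have h1 := congrArg Units.val (hμ' g h)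
    have h2 := congrArg Units.val (hμ' h g)
    rw [← hgh] at h2
    simp only [Units.val_mul, Units.val_inv_eq_inv_val] at h1 h2
    have hM : (↑(μ (h * g)) : ℂ) ≠ 0 := Units.ne_zero _
    have hπgh : (↑(F (π g, π h)) : ℂ) ≠ 0 := Units.ne_zero _
    have hπhg : (↑(F (π h, π g)) : ℂ) ≠ 0 := Units.ne_zero _
    field_simp at h1 h2
    simp only [Dade.pair, Units.ext_iff, Units.val_mul, Units.val_inv_eq_inv_val]
    have hhg : (↑(F (h, g)) : ℂ) ≠ 0 := Units.ne_zero _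
    field_simp
    have hD : (↑(μ g) : ℂ) * (↑(μ h) : ℂ) ≠ 0 :=
      mul_ne_zero (Units.ne_zero _) (Units.ne_zero _)
    apply mul_left_cancel₀ hD
    linear_combination (↑(F (h, g)) : ℂ) * h1 - (↑(F (g, h)) : ℂ) * h2
  -- tau is central
  have hτc : ∀ x : Heis q, Heis.tau q * x = x * Heis.tau q := by
    intro x; rw [Dade.tau_eq]; exact Dade.heis_central 1 x
  -- action of π on the generators
  have hwv : (((w : ZMod q).val : ZMod q)) = (w : ZMod q) := by
    simp [ZMod.natCast_val, ZMod.cast_id]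
  have hπτ : π (Heis.tau q) = (Heis.tau q) ^ ((w : ZMod q)).val := by
    have h0 : π (Heis.tau q) = Dade.hmk ((w : ZMod q) * 1) ((w : ZMod q) * 0) 0 := rfl
    rw [h0, Dade.tau_pow]
    exact Dade.hmk_inj (by rw [hwv, mul_one]) (by rw [mul_zero]) rfl
  have hπσ : π (Heis.sigma q) = (Heis.sigma q) ^ ((w : ZMod q)).val := by
    have h0 : π (Heis.sigma q) = Dade.hmk ((w : ZMod q) * 0) ((w : ZMod q) * 1) 0 := rfl
    rw [h0, Dade.sigma_pow]
    exact Dade.hmk_inj (by rw [mul_zero]) (by rw [hwv, mul_one]) rfl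
  have hπρ : π (Heis.rho q) = Heis.rho q := by
    have h0 : π (Heis.rho q) = Dade.hmk ((w : ZMod q) * 0) ((w : ZMod q) * 0) 1 := rfl
    rw [h0, Dade.rho_eq]
    exact Dade.hmk_inj (by rw [mul_zero]) (by rw [mul_zero]) rfl
  -- both basic pairing values are trivial
  have hζ1 : Dade.pair F (Heis.tau q) (Heis.sigma q) = 1 := by
    refine Dade.root_triv hq (n := (w : ZMod q).val * (w : ZMod q).val) ?_ ?_ ?_
    · rw [← Dade.pair_pow hF (hτc _) q, Dade.sigma_pow_q, Dade.pair_one hF]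
    · rw [← Dade.pair_pow_pow hF (hτc _)]
      conv_lhs => rw [← hπτ, ← hπσ]
      exact hpinv _ _ (hτc _)
    · intro hcon
      apply hw
      rw [pow_two, ← hwv]
      exact_mod_cast hcon
  have hζ2 : Dade.pair F (Heis.tau q) (Heis.rho q) = 1 := by
    refine Dade.root_triv hq (n := (w : ZMod q).val) ?_ ?_ ?_
    · rw [← Dade.pair_pow hF (hτc _) q, Dade.rho_pow_q, Dade.pair_one hF]
    · rw [← Dade.pair_pow_left hF (hτc _)]
      conv_lhs => rw [← hπτ, ← hπρ]
      exact hpinv _ _ (hτc _)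
    · intro hcon
      apply hw
      have hw1 : (w : ZMod q) = 1 := by rw [← hwv]; exact_mod_cast hcon
      rw [hw1, one_pow]
  -- hence tau pairs trivially with everything
  have hτpair : ∀ g : Heis q, Dade.pair F (Heis.tau q) g = 1 := by
    intro g
    conv_lhs => rw [Dade.heis_decomp g]
    rw [Dade.pair_mul hF (hτc _) (hτc _), Dade.pair_mul hF (hτc _) (hτc _),
      Dade.pair_pow hF (hτc _), Dade.pair_pow hF (hτc _), Dade.pair_pow hF (hτc _),
      Dade.pair_self, hζ1, hζ2]
    simp
  have htau : ∀ g : Heis q, F (Heis.tau q, g) = F (g, Heis.tau q) := by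
    intro g
    have := hτpair g
    rw [Dade.pair] at this
    exact mul_inv_eq_one.mp this
  obtain ⟨μ2, hμ2⟩ := Dade.heis_split hq.ne_zero a htau
  show (QuotientGroup.mk a : H2 (Heis q) ℂˣ) = 1
  rw [QuotientGroup.eq_one_iff, Subgroup.mem_subgroupOf]
  exact ⟨μ2, hμ2⟩
end
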